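/- arXiv:1211.3162 — 7 statements merged into one kernel-verified Lean document; each statement's English description precedes it below -/
import Mathlib

section
/- Let n ≥ 1, let γ₀ : ℝ → ℝⁿ be of class C¹ and v₀ : ℝ → ℝⁿ be continuous, with γ₀'(x)·v₀(x) = 0 and |γ₀'(x)|² + |v₀(x)|² = 1 for all x ∈ ℝ. Define a(x) = γ₀(x) + ∫₀ˣ v₀(y) dy and b(x) = γ₀(x) − ∫₀ˣ v₀(y) dy, and γ(t,x) = (a(x+t)+b(x−t))/2. Then a and b are C¹ with |a'(x)| = |b'(x)| = 1 for all x, γ is C¹ with γ(0,x) = γ₀(x) and ∂ₜγ(0,x) = v₀(x) for all x, and for all (t,x) one has |∂ₓγ(t,x)|² + |∂ₜγ(t,x)|² = 1 and ∂ₓγ(t,x)·∂ₜγ(t,x) = 0. -/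
open scoped RealInnerProductSpace

/-- d'Alembert solution for an admissible couple in normalized form:
with `a = γ₀ + ∫ v₀`, `b = γ₀ − ∫ v₀` and `γ(t,x) = (a(x+t)+b(x−t))/2`, the maps `a, b`
are `C¹` with unit-speed derivatives, `γ` is `C¹`, attains the initial data, and satisfies
the orthogonal gauge constraints. -/
theorem stmt_1 (n : ℕ) (hn : 1 ≤ n)
    (γ₀ v₀ : ℝ → EuclideanSpace ℝ (Fin n))
    (hγ₀ : ContDiff ℝ 1 γ₀) (hv₀ : Continuous v₀)
    (horth : ∀ x, ⟪deriv γ₀ x, v₀ x⟫ = 0)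
    (hnorm : ∀ x, ‖deriv γ₀ x‖ ^ 2 + ‖v₀ x‖ ^ 2 = 1)
    (a b : ℝ → EuclideanSpace ℝ (Fin n))
    (ha : ∀ x, a x = γ₀ x + ∫ y in (0:ℝ)..x, v₀ y)
    (hb : ∀ x, b x = γ₀ x - ∫ y in (0:ℝ)..x, v₀ y)
    (γ : ℝ → ℝ → EuclideanSpace ℝ (Fin n))
    (hγ : ∀ t x, γ t x = ((1:ℝ)/2) • (a (x + t) + b (x - t))) :
    (ContDiff ℝ 1 a ∧ ContDiff ℝ 1 b) ∧
    (∀ x, ‖deriv a x‖ = 1 ∧ ‖deriv b x‖ = 1) ∧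
    ContDiff ℝ 1 (fun p : ℝ × ℝ => γ p.1 p.2) ∧
    (∀ x, γ 0 x = γ₀ x ∧ deriv (fun t => γ t x) 0 = v₀ x) ∧
    (∀ t x : ℝ,
      ‖deriv (fun y => γ t y) x‖ ^ 2 + ‖deriv (fun s => γ s x) t‖ ^ 2 = 1 ∧
      ⟪deriv (fun y => γ t y) x, deriv (fun s => γ s x) t⟫ = 0) := by
  set A : ℝ → EuclideanSpace ℝ (Fin n) := fun x => ∫ y in (0:ℝ)..x, v₀ y with hAdef
  have hIA : ∀ x, HasDerivAt A (v₀ x) x := fun x =>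
    (hv₀.integral_hasStrictDerivAt 0 x).hasDerivAt
  have hγ₀' : ∀ x, HasDerivAt γ₀ (deriv γ₀ x) x := fun x =>
    (hγ₀.differentiable one_ne_zero x).hasDerivAt
  have haf : a = fun x => γ₀ x + A x := funext ha
  have hbf : b = fun x => γ₀ x - A x := funext hb
  have ha' : ∀ x, HasDerivAt a (deriv γ₀ x + v₀ x) x := by
    rw [haf]; exact fun x => (hγ₀' x).add (hIA x)
  have hb' : ∀ x, HasDerivAt b (deriv γ₀ x - v₀ x) x := by
    rw [hbf]; exact fun x => (hγ₀' x).sub (hIA x)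
  have hda : ∀ x, deriv a x = deriv γ₀ x + v₀ x := fun x => (ha' x).deriv
  have hdb : ∀ x, deriv b x = deriv γ₀ x - v₀ x := fun x => (hb' x).deriv
  have hAc : ContDiff ℝ 1 A := by
    rw [contDiff_one_iff_deriv]
    refine ⟨fun x => (hIA x).differentiableAt, ?_⟩
    have : deriv A = v₀ := funext fun x => (hIA x).deriv
    rw [this]; exact hv₀
  have hca : ContDiff ℝ 1 a := by rw [haf]; exact hγ₀.add hAc
  have hcb : ContDiff ℝ 1 b := by rw [hbf]; exact hγ₀.sub hAc
  have hna : ∀ x, ‖deriv a x‖ = 1 := by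
    intro x
    have h2 : ‖deriv a x‖ ^ 2 = 1 := by
      rw [hda x, norm_add_sq_real, horth x]
      linarith [hnorm x]
    nlinarith [norm_nonneg (deriv a x)]
  have hnb : ∀ x, ‖deriv b x‖ = 1 := by
    intro x
    have h2 : ‖deriv b x‖ ^ 2 = 1 := by
      rw [hdb x, norm_sub_sq_real, horth x]
      linarith [hnorm x]
    nlinarith [norm_nonneg (deriv b x)]
  -- partial derivatives of γ
  have hx' : ∀ t x : ℝ, HasDerivAt (fun y => γ t y)
      (((1:ℝ)/2) • (deriv a (x + t) + deriv b (x - t))) x := by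
    intro t x
    have h1 : HasDerivAt (fun y => a (y + t)) (deriv a (x + t)) x := by
      have := ((ha' (x + t)).scomp x ((hasDerivAt_id x).add_const t))
      simpa [Function.comp_def, hda] using this
    have h2 : HasDerivAt (fun y => b (y - t)) (deriv b (x - t)) x := by
      have := ((hb' (x - t)).scomp x ((hasDerivAt_id x).sub_const t))
      simpa [Function.comp_def, hdb] using this
    have h3 := ((h1.add h2).const_smul ((1:ℝ)/2))
    have he : (fun y => γ t y) = fun y => ((1:ℝ)/2) • (a (y + t) + b (y - t)) :=
      funext fun y => hγ t y
    rw [he]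
    simpa [hda, Pi.add_def, Pi.smul_def] using h3
  have ht' : ∀ t x : ℝ, HasDerivAt (fun s => γ s x)
      (((1:ℝ)/2) • (deriv a (x + t) - deriv b (x - t))) t := by
    intro t x
    have h1 : HasDerivAt (fun s => a (x + s)) (deriv a (x + t)) t := by
      have := ((ha' (x + t)).scomp t ((hasDerivAt_id t).const_add x))
      simpa [Function.comp_def, hda] using this
    have h2 : HasDerivAt (fun s => b (x - s)) (-(deriv b (x - t))) t := by
      have := ((hb' (x - t)).scomp t ((hasDerivAt_id t).const_sub x))
      simpa [Function.comp_def, hdb, neg_smul] using this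
    have h3 := ((h1.add h2).const_smul ((1:ℝ)/2))
    have he : (fun s => γ s x) = fun s => ((1:ℝ)/2) • (a (x + s) + b (x - s)) :=
      funext fun s => hγ s x
    rw [he]
    simpa [hda, sub_eq_add_neg, Pi.add_def, Pi.smul_def] using h3
  refine ⟨⟨hca, hcb⟩, fun x => ⟨hna x, hnb x⟩, ?_, ?_, ?_⟩
  · have he : (fun p : ℝ × ℝ => γ p.1 p.2)
        = fun p : ℝ × ℝ => ((1:ℝ)/2) • (a (p.2 + p.1) + b (p.2 - p.1)) :=
      funext fun p => hγ p.1 p.2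
    rw [he]
    exact ((hca.comp (contDiff_snd.add contDiff_fst)).add
      (hcb.comp (contDiff_snd.sub contDiff_fst))).const_smul _
  · intro x
    constructor
    · rw [hγ, add_zero, sub_zero, ha, hb]
      module
    · have := (ht' 0 x).deriv
      rw [this, add_zero, sub_zero, hda, hdb]
      module
  · intro t x
    rw [(hx' t x).deriv, (ht' t x).deriv]
    set u := deriv a (x + t)
    set w := deriv b (x - t)
    have hu : ‖u‖ = 1 := hna _
    have hw : ‖w‖ = 1 := hnb _
    constructor
    · have h12 : ‖(1/2:ℝ)‖ = 1/2 := by rw [Real.norm_eq_abs]; norm_num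
      rw [norm_smul, norm_smul, h12, mul_pow, mul_pow, norm_add_sq_real, norm_sub_sq_real,
        hu, hw]
      ring
    · rw [real_inner_smul_left, real_inner_smul_right, inner_add_left, inner_sub_right,
        inner_sub_right, real_inner_comm w u, real_inner_self_eq_norm_sq,
        real_inner_self_eq_norm_sq, hu, hw]
      ring
end

section
/- Let n ≥ 1, let γ̂₀ : ℝ → ℝⁿ be of class C¹ with γ̂₀'(x) ≠ 0 for all x, and let v̂₀ : ℝ → ℝⁿ be continuous with |v̂₀(x)| < 1 for all x; assume γ̂₀' and v̂₀ are both periodic with period L > 0. Set E₀ = ∫₀ᴸ |γ̂₀'(x)| / √(1 − |v̂₀(x)|²) dx. Then there exists a strictly increasing C¹ bijection λ : ℝ → ℝ with λ'(x) > 0 for all x, satisfying λ(x + E₀) = λ(x) + L for all x, and such that for all x ∈ ℝ: λ'(x)² |γ̂₀'(λ(x))|² + |v̂₀(λ(x))|² = 1. In other words, the reparametrized couple (γ̂₀∘λ, v̂₀∘λ) satisfies the normalization |(γ̂₀∘λ)'|² + |v̂₀∘λ|² = 1 and is periodic with period E₀. -/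
/-- normalization of a periodic admissible couple. Given a `C¹` immersion
`γ̂₀` and a continuous velocity `v̂₀` with `|v̂₀| < 1`, both with `L`-periodic data, and
`E₀ = ∫₀ᴸ |γ̂₀'| / √(1 − |v̂₀|²)`, there is an increasing `C¹` diffeomorphism `λ` of `ℝ`
with `λ(x+E₀) = λ(x)+L` such that the reparametrized couple satisfies the normalization
`|(γ̂₀∘λ)'|² + |v̂₀∘λ|² = 1`. -/
theorem stmt_2 (n : ℕ) (hn : 1 ≤ n)
    (γ₀ v₀ : ℝ → EuclideanSpace ℝ (Fin n))
    (hγ₀ : ContDiff ℝ 1 γ₀) (himm : ∀ x, deriv γ₀ x ≠ 0)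
    (hv₀ : Continuous v₀) (hv₀1 : ∀ x, ‖v₀ x‖ < 1)
    (L : ℝ) (hL : 0 < L)
    (hper1 : Function.Periodic (deriv γ₀) L) (hper2 : Function.Periodic v₀ L)
    (E₀ : ℝ)
    (hE₀ : E₀ = ∫ x in (0:ℝ)..L, ‖deriv γ₀ x‖ / Real.sqrt (1 - ‖v₀ x‖ ^ 2)) :
    ∃ lam : ℝ → ℝ, StrictMono lam ∧ Function.Bijective lam ∧ ContDiff ℝ 1 lam ∧
      (∀ x, 0 < deriv lam x) ∧
      (∀ x, lam (x + E₀) = lam x + L) ∧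
      (∀ x, (deriv lam x) ^ 2 * ‖deriv γ₀ (lam x)‖ ^ 2 + ‖v₀ (lam x)‖ ^ 2 = 1) := by
  set f : ℝ → ℝ := fun t => ‖deriv γ₀ t‖ / Real.sqrt (1 - ‖v₀ t‖ ^ 2) with hf_def
  have hsqpos : ∀ t, 0 < Real.sqrt (1 - ‖v₀ t‖ ^ 2) := by
    intro t
    apply Real.sqrt_pos.mpr
    have h1 : ‖v₀ t‖ ^ 2 < 1 := by
      have := hv₀1 t
      nlinarith [norm_nonneg (v₀ t)]
    linarith
  have hfpos : ∀ t, 0 < f t := by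
    intro t
    exact div_pos (norm_pos_iff.mpr (himm t)) (hsqpos t)
  have hfcont : Continuous f := by
    apply Continuous.div ((hγ₀.continuous_deriv le_rfl).norm)
    · exact (continuous_const.sub ((hv₀.norm.pow 2))).sqrt
    · exact fun t => (hsqpos t).ne'
  have hfper : Function.Periodic f L := by
    intro t
    simp only [hf_def, hper1 t, hper2 t]
  have hfint : ∀ a b : ℝ, IntervalIntegrable f MeasureTheory.volume a b :=
    fun a b => hfcont.intervalIntegrable a b
  set Φ : ℝ → ℝ := fun x => ∫ t in (0:ℝ)..x, f t with hΦ_def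
  have hΦderiv : ∀ x, HasDerivAt Φ (f x) x := by
    intro x
    exact intervalIntegral.integral_hasDerivAt_right (hfint 0 x)
      (hfcont.stronglyMeasurableAtFilter _ _) hfcont.continuousAt
  have hΦmono : StrictMono Φ := by
    apply strictMono_of_deriv_pos
    intro x
    rw [(hΦderiv x).deriv]
    exact hfpos x
  have hΦadd : ∀ x, Φ (x + L) = Φ x + E₀ := by
    intro x
    have h1 : Φ (x + L) = Φ x + ∫ t in x..x + L, f t := by
      rw [hΦ_def]
      exact (intervalIntegral.integral_add_adjacent_intervals (hfint 0 x) (hfint x (x + L))).symm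
    rw [h1, hfper.intervalIntegral_add_eq x 0, zero_add, hE₀]
  have hΦsurj : Function.Surjective Φ := by
    apply Continuous.surjective
    · exact (Differentiable.continuous (fun x => (hΦderiv x).differentiableAt))
    · exact hfper.tendsto_atTop_intervalIntegral_of_pos' (hfint 0 L) hfpos hL
    · exact hfper.tendsto_atBot_intervalIntegral_of_pos' (hfint 0 L) hfpos hL
  set e : ℝ ≃o ℝ := StrictMono.orderIsoOfSurjective Φ hΦmono hΦsurj with he_def
  have he_apply : ∀ x, e x = Φ x := fun x => rfl
  set lam : ℝ → ℝ := fun y => e.symm y with hlam_def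
  have hlamcont : Continuous lam := e.symm.continuous
  have hΦlam : ∀ y, Φ (lam y) = y := fun y => e.apply_symm_apply y
  have hlaminv : ∀ x, lam (Φ x) = x := fun x => e.symm_apply_apply x
  have hlamderiv : ∀ y, HasDerivAt lam (f (lam y))⁻¹ y := by
    intro y
    exact HasDerivAt.of_local_left_inverse hlamcont.continuousAt (hΦderiv (lam y))
      (hfpos (lam y)).ne' (Filter.Eventually.of_forall hΦlam)
  have hderiv_eq : ∀ y, deriv lam y = (f (lam y))⁻¹ := fun y => (hlamderiv y).deriv
  refine ⟨lam, e.symm.strictMono, e.symm.bijective, ?_, ?_, ?_, ?_⟩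
  · rw [contDiff_one_iff_deriv]
    constructor
    · exact fun y => (hlamderiv y).differentiableAt
    · have : deriv lam = fun y => (f (lam y))⁻¹ := funext hderiv_eq
      rw [this]
      exact ((hfcont.comp hlamcont).inv₀ (fun y => (hfpos (lam y)).ne'))
  · intro y
    rw [hderiv_eq y]
    exact inv_pos.mpr (hfpos (lam y))
  · intro x
    apply e.injective
    rw [he_apply, he_apply, hΦlam, hΦadd, hΦlam]
  · intro x
    rw [hderiv_eq x]
    set u := lam x
    have hγ : ‖deriv γ₀ u‖ ≠ 0 := norm_ne_zero_iff.mpr (himm u)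
    have hsq : Real.sqrt (1 - ‖v₀ u‖ ^ 2) ^ 2 = 1 - ‖v₀ u‖ ^ 2 := by
      apply Real.sq_sqrt
      have := hv₀1 u
      nlinarith [norm_nonneg (v₀ u)]
    have hfu : f u = ‖deriv γ₀ u‖ / Real.sqrt (1 - ‖v₀ u‖ ^ 2) := rfl
    rw [hfu]
    rw [inv_div]
    field_simp
    nlinarith [hsq]
end

section
/- Let n ≥ 1, let a, b : ℝ → ℝⁿ be of class C¹ with |a'(s)| = |b'(s)| = 1 for all s, define γ(t,x) = (a(x+t)+b(x−t))/2 and ψ(t,x) = (t, γ(t,x)) ∈ ℝ^{1+n}. Let (v,w)ₘ = −v⁰w⁰ + Σᵢ vⁱwⁱ denote the Minkowski inner product on ℝ^{1+n}. Then for every (t,x), the determinant of the 2×2 induced metric matrix with entries g₁₁ = (∂ₜψ, ∂ₜψ)ₘ, g₁₂ = g₂₁ = (∂ₜψ, ∂ₓψ)ₘ, g₂₂ = (∂ₓψ, ∂ₓψ)ₘ equals −|∂ₓγ(t,x)|⁴. In particular this determinant is strictly negative (i.e. ψ is a timelike immersion at (t,x)) if and only if a'(x+t) + b'(x−t) ≠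 0. -/
set_option maxHeartbeats 1000000


open scoped RealInnerProductSpace

/-- for `ψ(t,x) = (t, γ(t,x))` with `γ(t,x) = (a(x+t)+b(x−t))/2` and
`|a'| = |b'| = 1`, the determinant of the induced (Minkowski) metric equals `−|∂ₓγ|⁴`;
in particular it is negative (timelike immersion) iff `a'(x+t) + b'(x−t) ≠ 0`. -/
theorem stmt_3 (n : ℕ) (hn : 1 ≤ n)
    (a b : ℝ → EuclideanSpace ℝ (Fin n))
    (ha : ContDiff ℝ 1 a) (hb : ContDiff ℝ 1 b)
    (hnorm : ∀ s, ‖deriv a s‖ = 1 ∧ ‖deriv b s‖ = 1)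
    (γ : ℝ → ℝ → EuclideanSpace ℝ (Fin n))
    (hγ : ∀ t x, γ t x = ((1:ℝ)/2) • (a (x + t) + b (x - t)))
    (mink : (ℝ × EuclideanSpace ℝ (Fin n)) → (ℝ × EuclideanSpace ℝ (Fin n)) → ℝ)
    (hmink : ∀ v w, mink v w = -(v.1 * w.1) + ⟪v.2, w.2⟫)
    (t x : ℝ)
    (ψt ψx : ℝ × EuclideanSpace ℝ (Fin n))
    (hψt : ψt = deriv (fun s => ((s, γ s x) : ℝ × EuclideanSpace ℝ (Fin n))) t)
    (hψx : ψx = deriv (fun y => ((t, γ t y) : ℝ × EuclideanSpace ℝ (Fin n))) x)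
    (g11 g12 g22 : ℝ)
    (hg11 : g11 = mink ψt ψt) (hg12 : g12 = mink ψt ψx) (hg22 : g22 = mink ψx ψx) :
    g11 * g22 - g12 ^ 2 = -‖deriv (fun y => γ t y) x‖ ^ 4 ∧
    (g11 * g22 - g12 ^ 2 < 0 ↔ deriv a (x + t) + deriv b (x - t) ≠ 0) := by
  set A := deriv a (x + t) with hA
  set B := deriv b (x - t) with hB
  have hAd : HasDerivAt a A (x + t) := (ha.differentiable one_ne_zero (x + t)).hasDerivAt
  have hBd : HasDerivAt b B (x - t) := (hb.differentiable one_ne_zero (x - t)).hasDerivAt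
  have h1 : HasDerivAt (fun s => γ s x) (((1:ℝ)/2) • (A + -B)) t := by
    have : HasDerivAt (fun s => ((1:ℝ)/2) • (a (x + s) + b (x - s)))
        (((1:ℝ)/2) • (A + -B)) t :=
      ((hAd.comp_const_add x t).add (hBd.comp_const_sub x t)).const_smul ((1:ℝ)/2)
    simpa [hγ] using this
  have h2 : HasDerivAt (fun y => γ t y) (((1:ℝ)/2) • (A + B)) x := by
    have : HasDerivAt (fun y => ((1:ℝ)/2) • (a (y + t) + b (y - t)))
        (((1:ℝ)/2) • (A + B)) x :=
      ((hAd.comp_add_const x t).add (hBd.comp_sub_const x t)).const_smul ((1:ℝ)/2)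
    simpa [hγ] using this
  have hψt' : ψt = (1, ((1:ℝ)/2) • (A + -B)) := by
    rw [hψt]; exact ((hasDerivAt_id t).prodMk h1).deriv
  have hψx' : ψx = (0, ((1:ℝ)/2) • (A + B)) := by
    rw [hψx]; exact ((hasDerivAt_const x t).prodMk h2).deriv
  have hderivγ : deriv (fun y => γ t y) x = ((1:ℝ)/2) • (A + B) := h2.deriv
  have hnA : ‖A‖ = 1 := (hnorm (x + t)).1
  have hnB : ‖B‖ = 1 := (hnorm (x - t)).2
  have hAA : (⟪A, A⟫ : ℝ) = 1 := by
    rw [real_inner_self_eq_norm_sq, hnA]; norm_num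
  have hBB : (⟪B, B⟫ : ℝ) = 1 := by
    rw [real_inner_self_eq_norm_sq, hnB]; norm_num
  set u := (⟪A, B⟫ : ℝ) with hu
  have hBA : (⟪B, A⟫ : ℝ) = u := by rw [hu, real_inner_comm]
  have hg11' : g11 = -(1 + u) / 2 := by
    rw [hg11, hmink, hψt']
    simp only [inner_smul_left, inner_smul_right, inner_add_left, inner_add_right,
      inner_neg_left, inner_neg_right, conj_trivial, hAA, hBB, hBA, ← hu]
    ring
  have hg12' : g12 = 0 := by
    rw [hg12, hmink, hψt', hψx']
    simp only [inner_smul_left, inner_smul_right, inner_add_left, inner_add_right,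
      inner_neg_left, inner_neg_right, conj_trivial, hAA, hBB, hBA, ← hu]
    ring
  have hg22' : g22 = (1 + u) / 2 := by
    rw [hg22, hmink, hψx']
    simp only [inner_smul_left, inner_smul_right, inner_add_left, inner_add_right,
      conj_trivial, hAA, hBB, hBA, ← hu]
    ring
  have hnormgx : ‖deriv (fun y => γ t y) x‖ ^ 2 = (1 + u) / 2 := by
    rw [hderivγ, ← real_inner_self_eq_norm_sq]
    simp only [inner_smul_left, inner_smul_right, inner_add_left, inner_add_right,
      conj_trivial, hAA, hBB, hBA, ← hu]
    ring
  have hdet : g11 * g22 - g12 ^ 2 = -((1 + u) / 2) ^ 2 := by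
    rw [hg11', hg12', hg22']; ring
  constructor
  · rw [hdet, ← hnormgx]; ring
  · rw [hdet]
    constructor
    · intro h hAB
      rw [hAB, smul_zero] at hderivγ
      rw [hderivγ, norm_zero] at hnormgx
      rw [← hnormgx] at h
      norm_num at h
    · intro hAB
      have hne : ((1:ℝ) + u) / 2 ≠ 0 := by
        intro h0
        apply hAB
        have hz : ‖deriv (fun y => γ t y) x‖ = 0 := by
          have := hnormgx.trans h0
          nlinarith [norm_nonneg (deriv (fun y => γ t y) x)]
        rw [hderivγ, norm_eq_zero] at hz
        have := congrArg (fun v => (2:ℝ) • v) hz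
        simpa [smul_smul] using this
      have hp : 0 < ((1 + u) / 2) ^ 2 := by positivity
      linarith
end

section
/- Let a, b : ℝ → ℝ² be of class C¹ with |a'(s)| = |b'(s)| = 1 for all s, and suppose a' and b' are periodic with period E₀ > 0 and ∫₀^{E₀} (a'(s) + b'(s)) ds = 0. Then there exist s, σ ∈ ℝ such that a'(s) + b'(σ) = 0. Consequently, by the characterization of global timelike extremal immersions, the map γ(t,x) = (a(x+t)+b(x−t))/2 has ∂ₓγ(t₀,x₀) = 0 at some point: no closed curve in the plane can be immersed in a global timelike extremal cylinder in ℝ^{1+2}. -/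
open Complex intervalIntegral

/-- A unit complex number different from `-1` lies in the slit plane. -/
lemma aux_unit_slit {z : ℂ} (hz : ‖z‖ = 1) (h : z ≠ -1) :
    z ∈ Complex.slitPlane := by
  rw [Complex.mem_slitPlane_iff]
  by_contra hc
  push_neg at hc
  obtain ⟨h1, h2⟩ := hc
  have hzre : z = (z.re : ℂ) := Complex.ext rfl (by simpa using h2)
  have habs : |z.re| = 1 := by
    have := hz
    rw [hzre, Complex.norm_real, Real.norm_eq_abs] at this
    exact this
  have : z.re = -1 := by
    rcases abs_eq (by norm_num : (0:ℝ) ≤ 1) |>.mp habs with h' | h'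
    · linarith
    · exact h'
  exact h (by rw [hzre, this]; norm_num)

/-- Core angle lemma: if two continuous angle functions have all pairwise differences in
`(-π, π)` then the integral of `exp(θa s * I) + exp(θc s * I)` over `[0, E₀]` cannot vanish. -/
lemma aux_angles (θa θc : ℝ → ℝ) (hθa : Continuous θa) (hθc : Continuous θc)
    (E₀ : ℝ) (hE₀ : 0 < E₀)
    (hbound : ∀ s σ : ℝ, -Real.pi < θa s - θc σ ∧ θa s - θc σ < Real.pi)
    (hint : (∫ s in (0:ℝ)..E₀,
      (Complex.exp (θa s * Complex.I) + Complex.exp (θc s * Complex.I))) = 0) :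
    False := by
  set h : ℝ → ℝ := fun s => (θa s + θc s) / 2 with hh
  have conth : Continuous h := by
    rw [hh]; exact (hθa.add hθc).div_const 2
  obtain ⟨s₁, hs₁m, hs₁⟩ := isCompact_Icc.exists_isMaxOn
    (Set.nonempty_Icc.mpr hE₀.le) conth.continuousOn (f := h)
  obtain ⟨s₂, hs₂m, hs₂⟩ := isCompact_Icc.exists_isMinOn
    (Set.nonempty_Icc.mpr hE₀.le) conth.continuousOn (f := h)
  set ψ : ℝ := (h s₁ + h s₂) / 2 with hψ
  have hMm : h s₁ - h s₂ < Real.pi := by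
    have h1 := (hbound s₁ s₂).2
    have h2 := (hbound s₂ s₁).1
    have e1 : h s₁ = (θa s₁ + θc s₁) / 2 := rfl
    have e2 : h s₂ = (θa s₂ + θc s₂) / 2 := rfl
    linarith
  set g : ℝ → ℝ := fun s => Real.cos (θa s - ψ) + Real.cos (θc s - ψ) with hg
  have hgpos : ∀ s ∈ Set.Ioo (0:ℝ) E₀, 0 < g s := by
    intro s hs
    have hsmem : s ∈ Set.Icc (0:ℝ) E₀ := Set.Ioo_subset_Icc_self hs
    have hub : h s ≤ h s₁ := hs₁ hsmem
    have hlb : h s₂ ≤ h s := hs₂ hsmem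
    have c1 : 0 < Real.cos (h s - ψ) := by
      apply Real.cos_pos_of_mem_Ioo
      constructor
      · linarith [hψ]
      · linarith [hψ]
    have c2 : 0 < Real.cos ((θa s - θc s) / 2) := by
      have hb := hbound s s
      apply Real.cos_pos_of_mem_Ioo
      constructor
      · linarith [hb.1]
      · linarith [hb.2]
    have hge : g s = 2 * Real.cos (h s - ψ) * Real.cos ((θa s - θc s) / 2) := by
      have eh : h s = (θa s + θc s) / 2 := rfl
      have eg : g s = Real.cos (θa s - ψ) + Real.cos (θc s - ψ) := rfl
      rw [eg, Real.cos_add_cos]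
      have e1 : (θa s - ψ + (θc s - ψ)) / 2 = h s - ψ := by rw [eh]; ring
      have e2 : (θa s - ψ - (θc s - ψ)) / 2 = (θa s - θc s) / 2 := by ring
      rw [e1, e2]
    rw [hge]
    positivity
  have hgc : Continuous g := by
    rw [hg]
    exact  ((Real.continuous_cos.comp (hθa.sub continuous_const)).add
      (Real.continuous_cos.comp (hθc.sub continuous_const)))
  have hposint : 0 < ∫ s in (0:ℝ)..E₀, g s :=
    intervalIntegral_pos_of_pos_on (hgc.intervalIntegrable 0 E₀) hgpos hE₀
  -- compute the integral of g as a real part of the complex integral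
  have hFc : Continuous (fun s => Complex.exp (θa s * Complex.I) + Complex.exp (θc s * Complex.I)) := by
    apply Continuous.add
    · exact Complex.continuous_exp.comp ((Complex.continuous_ofReal.comp hθa).mul continuous_const)
    · exact Complex.continuous_exp.comp ((Complex.continuous_ofReal.comp hθc).mul continuous_const)
  have hgeq : ∀ s : ℝ, g s =
      ((Complex.exp (θa s * Complex.I) + Complex.exp (θc s * Complex.I)) *
        Complex.exp ((-ψ : ℝ) * Complex.I)).re := by
    intro s
    have e1 : (θa s : ℂ) * Complex.I + ((-ψ : ℝ) : ℂ) * Complex.I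
        = ((θa s - ψ : ℝ) : ℂ) * Complex.I := by push_cast; ring
    have e2 : (θc s : ℂ) * Complex.I + ((-ψ : ℝ) : ℂ) * Complex.I
        = ((θc s - ψ : ℝ) : ℂ) * Complex.I := by push_cast; ring
    have eg : g s = Real.cos (θa s - ψ) + Real.cos (θc s - ψ) := rfl
    rw [eg, add_mul, ← Complex.exp_add, ← Complex.exp_add, e1, e2, Complex.add_re,
      Complex.exp_ofReal_mul_I_re, Complex.exp_ofReal_mul_I_re]
  have hzero : (∫ s in (0:ℝ)..E₀, g s) = 0 := by
    have hInt : IntervalIntegrable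
        (fun s => (Complex.exp (θa s * Complex.I) + Complex.exp (θc s * Complex.I)) *
          Complex.exp ((-ψ : ℝ) * Complex.I)) MeasureTheory.volume 0 E₀ :=
      (hFc.mul continuous_const).intervalIntegrable 0 E₀
    calc (∫ s in (0:ℝ)..E₀, g s)
        = ∫ s in (0:ℝ)..E₀, ((Complex.exp (θa s * Complex.I) + Complex.exp (θc s * Complex.I)) *
            Complex.exp ((-ψ : ℝ) * Complex.I)).re := by
          apply intervalIntegral.integral_congr
          intro s _
          exact hgeq s
      _ = ((∫ s in (0:ℝ)..E₀, (Complex.exp (θa s * Complex.I) + Complex.exp (θc s * Complex.I)) *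
            Complex.exp ((-ψ : ℝ) * Complex.I))).re := by
          exact Complex.reCLM.intervalIntegral_comp_comm hInt
      _ = (((∫ s in (0:ℝ)..E₀, (Complex.exp (θa s * Complex.I) + Complex.exp (θc s * Complex.I))) *
            Complex.exp ((-ψ : ℝ) * Complex.I))).re := by
          rw [intervalIntegral.integral_mul_const]
      _ = 0 := by rw [hint, zero_mul, Complex.zero_re]
  rw [hzero] at hposint
  exact lt_irrefl 0 hposint

/-- Complex version of the main statement: two continuous unit-circle-valued curves whose sum
has vanishing integral over `[0, E₀]` must have antipodal values somewhere. -/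
lemma aux_complex (A B : ℝ → ℂ) (hA : Continuous A) (hB : Continuous B)
    (hA1 : ∀ s, ‖A s‖ = 1) (hB1 : ∀ s, ‖B s‖ = 1)
    (E₀ : ℝ) (hE₀ : 0 < E₀)
    (hint : (∫ s in (0:ℝ)..E₀, (A s + B s)) = 0) :
    ∃ s σ : ℝ, A s + B σ = 0 := by
  by_contra hcon
  push_neg at hcon
  have hA0 : A 0 ≠ 0 := by intro h; have := hA1 0; rw [h] at this; simp at this
  have hB0 : B 0 ≠ 0 := by intro h; have := hB1 0; rw [h] at this; simp at this
  -- division curves avoid -1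
  have hdivA : ∀ s, A s / B 0 ≠ -1 := by
    intro s h
    apply hcon s 0
    field_simp at h
    rw [h]; ring
  have hdivB : ∀ σ, B σ / A 0 ≠ -1 := by
    intro σ h
    apply hcon 0 σ
    field_simp at h
    rw [h]; ring
  have habsA : ∀ s, ‖A s / B 0‖ = 1 := by
    intro s; rw [norm_div, hA1, hB1]; norm_num
  have habsB : ∀ σ, ‖B σ / A 0‖ = 1 := by
    intro σ; rw [norm_div, hB1, hA1]; norm_num
  have hslitA : ∀ s, A s / B 0 ∈ Complex.slitPlane := fun s => aux_unit_slit (habsA s) (hdivA s)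
  have hslitB : ∀ σ, B σ / A 0 ∈ Complex.slitPlane := fun σ => aux_unit_slit (habsB σ) (hdivB σ)
  set θa : ℝ → ℝ := fun s => (B 0).arg + (A s / B 0).arg with hθa_def
  set θb : ℝ → ℝ := fun σ => (A 0).arg + (B σ / A 0).arg with hθb_def
  have contθa : Continuous θa := by
    rw [hθa_def]
    apply continuous_const.add
    rw [continuous_iff_continuousAt]
    intro s
    exact ContinuousAt.comp (g := Complex.arg) (f := fun x => A x / B 0)
      (Complex.continuousAt_arg (hslitA s)) ((hA.div_const (B 0)).continuousAt)
  have contθb : Continuous θb := by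
    rw [hθb_def]
    apply continuous_const.add
    rw [continuous_iff_continuousAt]
    intro σ
    exact ContinuousAt.comp (g := Complex.arg) (f := fun x => B x / A 0)
      (Complex.continuousAt_arg (hslitB σ)) ((hB.div_const (A 0)).continuousAt)
  have hexpA : ∀ s, A s = Complex.exp (θa s * Complex.I) := by
    intro s
    have h1 : B 0 = Complex.exp ((B 0).arg * Complex.I) := by
      conv_lhs => rw [← Complex.norm_mul_exp_arg_mul_I (B 0)]
      rw [hB1 0]; norm_num
    have h2 : A s / B 0 = Complex.exp ((A s / B 0).arg * Complex.I) := by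
      conv_lhs => rw [← Complex.norm_mul_exp_arg_mul_I (A s / B 0)]
      rw [habsA s]; norm_num
    have h3 : A s = B 0 * (A s / B 0) := by field_simp
    have h4 : Complex.exp (θa s * Complex.I) = B 0 * (A s / B 0) := by
      have e : (θa s : ℂ) * Complex.I
          = ((B 0).arg : ℂ) * Complex.I + ((A s / B 0).arg : ℂ) * Complex.I := by
        have e0 : θa s = (B 0).arg + (A s / B 0).arg := rfl
        rw [e0]; push_cast; ring
      rw [e, Complex.exp_add, ← h1, ← h2]
    rw [h4]
    exact h3
  have hexpB : ∀ σ, B σ = Complex.exp (θb σ * Complex.I) := by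
    intro σ
    have h1 : A 0 = Complex.exp ((A 0).arg * Complex.I) := by
      conv_lhs => rw [← Complex.norm_mul_exp_arg_mul_I (A 0)]
      rw [hA1 0]; norm_num
    have h2 : B σ / A 0 = Complex.exp ((B σ / A 0).arg * Complex.I) := by
      conv_lhs => rw [← Complex.norm_mul_exp_arg_mul_I (B σ / A 0)]
      rw [habsB σ]; norm_num
    have h3 : B σ = A 0 * (B σ / A 0) := by field_simp
    have h4 : Complex.exp (θb σ * Complex.I) = A 0 * (B σ / A 0) := by
      have e : (θb σ : ℂ) * Complex.I
          = ((A 0).arg : ℂ) * Complex.I + ((B σ / A 0).arg : ℂ) * Complex.I := by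
        have e0 : θb σ = (A 0).arg + (B σ / A 0).arg := rfl
        rw [e0]; push_cast; ring
      rw [e, Complex.exp_add, ← h1, ← h2]
    rw [h4]
    exact h3
  -- the difference avoids odd multiples of π
  have KD : ∀ s σ : ℝ, ∀ m : ℤ, θa s - θb σ ≠ (2 * (m:ℝ) + 1) * Real.pi := by
    intro s σ m h
    apply hcon s σ
    have hth : θa s = θb σ + (m:ℝ) * (2 * Real.pi) + Real.pi := by linarith
    have : Complex.exp (θa s * Complex.I) = - Complex.exp (θb σ * Complex.I) := by
      rw [hth]
      push_cast
      rw [add_mul, add_mul, Complex.exp_add, Complex.exp_add]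
      rw [mul_assoc ((m:ℂ)) _ _]
      rw [show ((2:ℂ) * (Real.pi:ℂ)) * Complex.I = 2 * Real.pi * Complex.I by ring]
      rw [Complex.exp_int_mul_two_pi_mul_I, Complex.exp_pi_mul_I]
      ring
    rw [hexpA s, hexpB σ, this]
    ring
  -- connectedness: the difference stays in one interval ((2k-1)π, (2k+1)π)
  set D : ℝ × ℝ → ℝ := fun p => θa p.1 - θb p.2 with hD_def
  have hDcont : Continuous D := (contθa.comp continuous_fst).sub (contθb.comp continuous_snd)
  set k : ℤ := round (D (0, 0) / (2 * Real.pi)) with hk_def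
  have hpi : (0:ℝ) < Real.pi := Real.pi_pos
  have hD00 : D (0, 0) = θa 0 - θb 0 := rfl
  have epm : (2 * (k:ℝ) - 1) * Real.pi = (k:ℝ) * (2 * Real.pi) - Real.pi := by ring
  have epp : (2 * (k:ℝ) + 1) * Real.pi = (k:ℝ) * (2 * Real.pi) + Real.pi := by ring
  have hk0 : (2 * (k:ℝ) - 1) * Real.pi < D (0, 0) ∧ D (0, 0) < (2 * (k:ℝ) + 1) * Real.pi := by
    have hr := abs_sub_round (D (0, 0) / (2 * Real.pi))
    rw [← hk_def] at hr
    have h2pi : (0:ℝ) < 2 * Real.pi := by linarith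
    have habs : |D (0, 0) - (k:ℝ) * (2 * Real.pi)| ≤ Real.pi := by
      have e : D (0, 0) - (k:ℝ) * (2 * Real.pi)
          = (D (0, 0) / (2 * Real.pi) - (k:ℝ)) * (2 * Real.pi) := by
        field_simp
      rw [e, abs_mul, abs_of_pos h2pi]
      calc |D (0, 0) / (2 * Real.pi) - (k:ℝ)| * (2 * Real.pi)
          ≤ 1 / 2 * (2 * Real.pi) := mul_le_mul_of_nonneg_right hr h2pi.le
        _ = Real.pi := by ring
    rw [abs_le] at habs
    have hne1 : D (0, 0) ≠ (2 * (k:ℝ) + 1) * Real.pi := by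
      rw [hD00]; exact KD 0 0 k
    have hne2 : D (0, 0) ≠ (2 * (k:ℝ) - 1) * Real.pi := by
      rw [hD00]
      intro h
      apply KD 0 0 (k - 1)
      push_cast
      push_cast at h
      linarith
    constructor
    · rcases lt_or_eq_of_le habs.1 with h | h
      · rw [epm]; linarith
      · exfalso; apply hne2; rw [epm]; linarith
    · rcases lt_or_eq_of_le habs.2 with h | h
      · rw [epp]; linarith
      · exfalso; apply hne1; rw [epp]; linarith
  have hall : ∀ p : ℝ × ℝ, (2 * (k:ℝ) - 1) * Real.pi < D p ∧ D p < (2 * (k:ℝ) + 1) * Real.pi := by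
    intro p
    constructor
    · by_contra hle
      push_neg at hle
      have hmem : (2 * (k:ℝ) - 1) * Real.pi ∈ Set.Icc (D p) (D (0, 0)) := ⟨hle, hk0.1.le⟩
      obtain ⟨q, hq⟩ := intermediate_value_univ p (0, 0) hDcont hmem
      apply KD q.1 q.2 (k - 1)
      have e : θa q.1 - θb q.2 = D q := rfl
      rw [e, hq]
      push_cast
      ring
    · by_contra hle
      push_neg at hle
      have hmem : (2 * (k:ℝ) + 1) * Real.pi ∈ Set.Icc (D (0, 0)) (D p) := ⟨hk0.2.le, hle⟩
      obtain ⟨q, hq⟩ := intermediate_value_univ (0, 0) p hDcont hmem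
      apply KD q.1 q.2 k
      have e : θa q.1 - θb q.2 = D q := rfl
      rw [e, hq]
  -- shift θb by 2kπ
  set θc : ℝ → ℝ := fun σ => θb σ + (k:ℝ) * (2 * Real.pi) with hθc_def
  have contθc : Continuous θc := contθb.add continuous_const
  have hboundc : ∀ s σ : ℝ, -Real.pi < θa s - θc σ ∧ θa s - θc σ < Real.pi := by
    intro s σ
    have hds : D (s, σ) = θa s - θb σ := rfl
    have h1 := (hall (s, σ)).1
    have h2 := (hall (s, σ)).2
    rw [hds, epm] at h1
    rw [hds, epp] at h2
    have ec : θc σ = θb σ + (k:ℝ) * (2 * Real.pi) := rfl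
    constructor <;> [linarith; linarith]
  have hexpC : ∀ σ, B σ = Complex.exp (θc σ * Complex.I) := by
    intro σ
    have ec : θc σ = θb σ + (k:ℝ) * (2 * Real.pi) := rfl
    rw [ec]
    push_cast
    rw [add_mul, Complex.exp_add]
    rw [mul_assoc ((k:ℂ)) _ _]
    rw [show ((2:ℂ) * (Real.pi:ℂ)) * Complex.I = 2 * Real.pi * Complex.I by ring]
    rw [Complex.exp_int_mul_two_pi_mul_I, mul_one]
    exact hexpB σ
  -- apply the angle lemma
  apply aux_angles θa θc contθa contθc E₀ hE₀ hboundc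
  rw [← hint]
  apply intervalIntegral.integral_congr
  intro s _
  simp only [← hexpA, ← hexpC]

/-- (no global timelike extremal cylinders in `ℝ^{1+2}`) if `a, b : ℝ → ℝ²`
are `C¹` with `|a'| = |b'| = 1`, `a'` and `b'` periodic with period `E₀ > 0` and
`∫₀^{E₀} (a' + b') = 0`, then `a'(s) + b'(σ) = 0` for some `s, σ`; consequently
`∂ₓγ(t₀,x₀) = 0` at some point, where `γ(t,x) = (a(x+t)+b(x−t))/2`. -/
theorem stmt_8
    (a b : ℝ → EuclideanSpace ℝ (Fin 2))
    (ha : ContDiff ℝ 1 a) (hb : ContDiff ℝ 1 b)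
    (hnorm : ∀ s, ‖deriv a s‖ = 1 ∧ ‖deriv b s‖ = 1)
    (E₀ : ℝ) (hE₀ : 0 < E₀)
    (hpera : Function.Periodic (deriv a) E₀) (hperb : Function.Periodic (deriv b) E₀)
    (hint : (∫ s in (0:ℝ)..E₀, (deriv a s + deriv b s)) = 0)
    (γ : ℝ → ℝ → EuclideanSpace ℝ (Fin 2))
    (hγ : ∀ t x, γ t x = ((1:ℝ)/2) • (a (x + t) + b (x - t))) :
    (∃ s σ : ℝ, deriv a s + deriv b σ = 0) ∧
    ∃ t₀ x₀ : ℝ, deriv (fun y => γ t₀ y) x₀ = 0 := by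
  have hda : Continuous (deriv a) := ha.continuous_deriv le_rfl
  have hdb : Continuous (deriv b) := hb.continuous_deriv le_rfl
  have hproj : ∀ i : Fin 2, Continuous (fun v : EuclideanSpace ℝ (Fin 2) => v i) :=
    fun i => (EuclideanSpace.proj i : EuclideanSpace ℝ (Fin 2) →L[ℝ] ℝ).continuous
  set A : ℝ → ℂ := fun s => ((deriv a s 0 : ℝ) : ℂ) + ((deriv a s 1 : ℝ) : ℂ) * Complex.I
    with hA_def
  set B : ℝ → ℂ := fun s => ((deriv b s 0 : ℝ) : ℂ) + ((deriv b s 1 : ℝ) : ℂ) * Complex.I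
    with hB_def
  have hAc : Continuous A := by
    rw [hA_def]
    exact (Complex.continuous_ofReal.comp ((hproj 0).comp hda)).add
      ((Complex.continuous_ofReal.comp ((hproj 1).comp hda)).mul continuous_const)
  have hBc : Continuous B := by
    rw [hB_def]
    exact (Complex.continuous_ofReal.comp ((hproj 0).comp hdb)).add
      ((Complex.continuous_ofReal.comp ((hproj 1).comp hdb)).mul continuous_const)
  have habs : ∀ v : EuclideanSpace ℝ (Fin 2), ‖v‖ = 1 →
      ‖((v 0 : ℝ) : ℂ) + ((v 1 : ℝ) : ℂ) * Complex.I‖ = 1 := by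
    intro v hv
    rw [Complex.norm_def, Complex.normSq_add_mul_I]
    rw [EuclideanSpace.norm_eq, Fin.sum_univ_two] at hv
    simp only [Real.norm_eq_abs] at hv
    rw [← _root_.sq_abs (v 0), ← _root_.sq_abs (v 1)]
    exact hv
  have hA1 : ∀ s, ‖A s‖ = 1 := fun s => habs _ (hnorm s).1
  have hB1 : ∀ s, ‖B s‖ = 1 := fun s => habs _ (hnorm s).2
  -- componentwise vanishing of the integral
  have hcomp : ∀ i : Fin 2, (∫ s in (0:ℝ)..E₀, (deriv a s i + deriv b s i)) = 0 := by
    intro i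
    have hfi : IntervalIntegrable (fun s => deriv a s + deriv b s)
        MeasureTheory.volume 0 E₀ := (hda.add hdb).intervalIntegrable 0 E₀
    have h1 := (EuclideanSpace.proj i : EuclideanSpace ℝ (Fin 2) →L[ℝ] ℝ).intervalIntegral_comp_comm hfi
    rw [hint, map_zero] at h1
    have h2 : (∫ s in (0:ℝ)..E₀, (deriv a s i + deriv b s i))
        = ∫ x in (0:ℝ)..E₀, (EuclideanSpace.proj i) (deriv a x + deriv b x) := by
      apply intervalIntegral.integral_congr
      intro s _
      simp [PiLp.proj_apply]
    exact h2.trans h1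
  have hintC : (∫ s in (0:ℝ)..E₀, (A s + B s)) = 0 := by
    have hfa0 : Continuous (fun s => deriv a s 0 + deriv b s 0) :=
      ((hproj 0).comp hda).add ((hproj 0).comp hdb)
    have hfa1 : Continuous (fun s => deriv a s 1 + deriv b s 1) :=
      ((hproj 1).comp hda).add ((hproj 1).comp hdb)
    calc (∫ s in (0:ℝ)..E₀, (A s + B s))
        = ∫ s in (0:ℝ)..E₀, (((deriv a s 0 + deriv b s 0 : ℝ) : ℂ)
            + ((deriv a s 1 + deriv b s 1 : ℝ) : ℂ) * Complex.I) := by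
          apply intervalIntegral.integral_congr
          intro s _
          rw [hA_def, hB_def]
          push_cast
          ring
      _ = (∫ s in (0:ℝ)..E₀, ((deriv a s 0 + deriv b s 0 : ℝ) : ℂ))
            + ∫ s in (0:ℝ)..E₀, ((deriv a s 1 + deriv b s 1 : ℝ) : ℂ) * Complex.I := by
          apply intervalIntegral.integral_add
          · exact (Complex.continuous_ofReal.comp hfa0).intervalIntegrable 0 E₀
          · exact ((Complex.continuous_ofReal.comp hfa1).mul
              continuous_const).intervalIntegrable 0 E₀
      _ = ((∫ s in (0:ℝ)..E₀, (deriv a s 0 + deriv b s 0) : ℝ) : ℂ)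
            + ((∫ s in (0:ℝ)..E₀, (deriv a s 1 + deriv b s 1) : ℝ) : ℂ) * Complex.I := by
          rw [intervalIntegral.integral_mul_const, intervalIntegral.integral_ofReal,
            intervalIntegral.integral_ofReal]
      _ = 0 := by rw [hcomp 0, hcomp 1]; simp
  obtain ⟨s, σ, hsσC⟩ := aux_complex A B hAc hBc hA1 hB1 E₀ hE₀ hintC
  have hsσ : deriv a s + deriv b σ = 0 := by
    rw [hA_def, hB_def] at hsσC
    simp only [] at hsσC
    have h01 : ((deriv a s 0 + deriv b σ 0 : ℝ) : ℂ)
        + ((deriv a s 1 + deriv b σ 1 : ℝ) : ℂ) * Complex.I = 0 := by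
      rw [← hsσC]; push_cast; ring
    have hre := congrArg Complex.re h01
    have him := congrArg Complex.im h01
    simp only [Complex.add_re, Complex.ofReal_re, Complex.mul_re, Complex.I_re, Complex.I_im,
      Complex.ofReal_im, Complex.add_im, Complex.mul_im, Complex.zero_re, Complex.zero_im,
      mul_zero, mul_one, zero_mul, sub_zero, add_zero, zero_add] at hre him
    ext i
    fin_cases i
    · simpa using hre
    · simpa using him
  refine ⟨⟨s, σ, hsσ⟩, (s - σ)/2, (s + σ)/2, ?_⟩
  have hx1 : (s + σ)/2 + (s - σ)/2 = s := by ring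
  have hx2 : (s + σ)/2 - (s - σ)/2 = σ := by ring
  have hda' : HasDerivAt a (deriv a s) ((s + σ)/2 + (s - σ)/2) := by
    rw [hx1]
    exact (ha.differentiable one_ne_zero s).hasDerivAt
  have hdb' : HasDerivAt b (deriv b σ) ((s + σ)/2 - (s - σ)/2) := by
    rw [hx2]
    exact (hb.differentiable one_ne_zero σ).hasDerivAt
  have h1 : HasDerivAt (fun y => a (y + (s - σ)/2)) (deriv a s) ((s + σ)/2) := by
    have := HasDerivAt.scomp ((s + σ)/2) hda'
      ((hasDerivAt_id ((s + σ)/2)).add_const ((s - σ)/2))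
    rw [one_smul] at this; exact this
  have h2 : HasDerivAt (fun y => b (y - (s - σ)/2)) (deriv b σ) ((s + σ)/2) := by
    have := HasDerivAt.scomp ((s + σ)/2) hdb'
      ((hasDerivAt_id ((s + σ)/2)).sub_const ((s - σ)/2))
    rw [one_smul] at this; exact this
  have h3 : HasDerivAt (fun y => ((1:ℝ)/2) • (a (y + (s - σ)/2) + b (y - (s - σ)/2)))
      (((1:ℝ)/2) • (deriv a s + deriv b σ)) ((s + σ)/2) := by
      have := (h1.add h2).const_smul ((1:ℝ)/2); exact this
  rw [hsσ, smul_zero] at h3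
  have hfun : (fun y => γ ((s - σ)/2) y)
      = fun y => ((1:ℝ)/2) • (a (y + (s - σ)/2) + b (y - (s - σ)/2)) :=
    funext fun y => hγ _ y
  rw [hfun]
  exact h3.deriv
end

section
/- Let E > 0 and let u, v : [0,E] → ℝ² be continuous maps with |u(s)| = 1 and |v(s)| = 1 for all s ∈ [0,E], and suppose ∫₀^E u(s) ds = ∫₀^E v(s) ds. Then the ranges of u and v intersect: there exist s, σ ∈ [0,E] with u(s) = v(σ). -/
open Real Set

lemma cos_sep' {r x : ℝ} (hr0 : 0 ≤ r) (h1 : r < x) (h2 : x < 2 * π - r) :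
    Real.cos x < Real.cos r := by
  rcases le_or_gt x π with hx | hx
  · exact Real.cos_lt_cos_of_nonneg_of_le_pi hr0 hx h1
  · calc Real.cos x = Real.cos (2 * π - (2 * π - x)) := by ring_nf
    _ = Real.cos (2 * π - x) := by rw [Real.cos_two_pi_sub]
    _ < Real.cos r := Real.cos_lt_cos_of_nonneg_of_le_pi hr0 (by linarith) (by linarith)

lemma abs_coords (x : EuclideanSpace ℝ (Fin 2)) :
    ‖((x 0 : ℂ) + (x 1 : ℂ) * Complex.I)‖ = ‖x‖ := by
  rw [Complex.norm_def, Complex.normSq_apply, EuclideanSpace.norm_eq]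
  simp [Fin.sum_univ_two, Real.norm_eq_abs, sq_abs, sq]

lemma coords_ext {x y : EuclideanSpace ℝ (Fin 2)} (h0 : x 0 = y 0) (h1 : x 1 = y 1) : x = y := by
  ext i
  fin_cases i <;> assumption

lemma arc_lemma {E : ℝ} (hE : 0 < E) {f : ℝ → ℂ} (hf : ContinuousOn f (Set.Icc 0 E))
    (h1 : ∀ s ∈ Set.Icc (0:ℝ) E, ‖f s‖ = 1) {p : ℂ} (hp : ‖p‖ = 1)
    (hpf : p ∉ f '' Set.Icc 0 E) :
    ∃ a b : ℝ, a ≤ b ∧ b - a < 2 * Real.pi ∧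
      f '' Set.Icc 0 E = (fun t : ℝ => Complex.exp (t * Complex.I)) '' Set.Icc a b := by
  have hp0 : (-p) ≠ 0 := by
    intro h
    rw [neg_eq_zero] at h
    simp [h] at hp
  set θ : ℝ → ℝ := fun s => Complex.arg (-p) + Complex.arg (f s * (-p)⁻¹) with hθdef
  have hfs : ∀ s, f s = (f s * (-p)⁻¹) * (-p) :=
    fun s => (by rw [mul_assoc, inv_mul_cancel₀ hp0, mul_one] : f s * (-p)⁻¹ * -p = f s).symm
  have habs : ∀ s ∈ Set.Icc (0:ℝ) E, ‖f s * (-p)⁻¹‖ = 1 := by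
    intro s hs
    rw [norm_mul, norm_inv, norm_neg, hp, h1 s hs]; norm_num
  have hslit : ∀ s ∈ Set.Icc (0:ℝ) E, f s * (-p)⁻¹ ∈ Complex.slitPlane := by
    intro s hs
    by_contra hns
    rw [Complex.mem_slitPlane_iff] at hns
    push_neg at hns
    obtain ⟨hre, him⟩ := hns
    have hnsq : (f s * (-p)⁻¹).re * (f s * (-p)⁻¹).re + (f s * (-p)⁻¹).im * (f s * (-p)⁻¹).im
        = 1 := by
      have h := Complex.sq_norm (f s * (-p)⁻¹)
      rw [habs s hs] at h
      simpa [Complex.normSq_apply] using h.symm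
    rw [him] at hnsq
    have hrem : (f s * (-p)⁻¹).re = -1 := by nlinarith
    have hfm1 : f s * (-p)⁻¹ = -1 := by
      apply Complex.ext <;> simp only [hrem, him, Complex.neg_re, Complex.neg_im, Complex.one_re, Complex.one_im, neg_zero]
    have : f s = p := by rw [hfs s, hfm1]; ring
    exact hpf ⟨s, hs, this⟩
  have hkey : ∀ s ∈ Set.Icc (0:ℝ) E,
      f s = Complex.exp (θ s * Complex.I) ∧ |Complex.arg (f s * (-p)⁻¹)| < π := by
    intro s hs
    have hexp1 : f s * (-p)⁻¹ = Complex.exp (Complex.arg (f s * (-p)⁻¹) * Complex.I) := by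
      conv_lhs => rw [← Complex.norm_mul_exp_arg_mul_I (f s * (-p)⁻¹)]
      rw [habs s hs]; norm_num
    have hexp2 : (-p) = Complex.exp (Complex.arg (-p) * Complex.I) := by
      conv_lhs => rw [← Complex.norm_mul_exp_arg_mul_I (-p)]
      rw [norm_neg, hp]; norm_num
    constructor
    · set A := Complex.arg (f s * (-p)⁻¹) with hA
      set B := Complex.arg (-p) with hB
      show f s = Complex.exp ((↑(B + A)) * Complex.I)
      rw [hfs s, hexp1, hexp2, ← Complex.exp_add]
      congr 1
      push_cast
      ring
    · rw [abs_lt]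
      refine ⟨Complex.neg_pi_lt_arg _, lt_of_le_of_ne (Complex.arg_le_pi _) ?_⟩
      intro hpi
      rw [hpi, Complex.exp_pi_mul_I] at hexp1
      have : f s = p := by rw [hfs s, hexp1]; ring
      exact hpf ⟨s, hs, this⟩
  have hθcont : ContinuousOn θ (Set.Icc 0 E) := by
    apply continuousOn_const.add
    intro s hs
    have hmul : ContinuousWithinAt (fun x => f x * (-p)⁻¹) (Set.Icc 0 E) s :=
      (hf s hs).mul continuousWithinAt_const
    exact ContinuousAt.comp_continuousWithinAt (f := fun x => f x * (-p)⁻¹)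
      (Complex.continuousAt_arg (hslit s hs)) hmul
  obtain ⟨s₁, hs₁, hmin⟩ := isCompact_Icc.exists_isMinOn ⟨0, Set.left_mem_Icc.2 hE.le⟩ hθcont
  obtain ⟨s₂, hs₂, hmax⟩ := isCompact_Icc.exists_isMaxOn ⟨0, Set.left_mem_Icc.2 hE.le⟩ hθcont
  have hab : θ s₁ ≤ θ s₂ := hmin hs₂
  refine ⟨θ s₁, θ s₂, hab, ?_, ?_⟩
  · have h₁ := (hkey s₁ hs₁).2
    have h₂ := (hkey s₂ hs₂).2
    rw [abs_lt] at h₁ h₂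
    have e₁ : θ s₁ = Complex.arg (-p) + Complex.arg (f s₁ * (-p)⁻¹) := rfl
    have e₂ : θ s₂ = Complex.arg (-p) + Complex.arg (f s₂ * (-p)⁻¹) := rfl
    rw [e₁, e₂]
    linarith [h₁.1, h₂.2]
  · apply Set.Subset.antisymm
    · rintro z ⟨s, hs, rfl⟩
      exact ⟨θ s, ⟨hmin hs, hmax hs⟩, ((hkey s hs).1).symm⟩
    · rintro z ⟨t, ht, rfl⟩
      have hsub : Set.uIcc s₁ s₂ ⊆ Set.Icc 0 E := Set.uIcc_subset_Icc hs₁ hs₂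
      have : t ∈ Set.uIcc (θ s₁) (θ s₂) := by
        rw [Set.uIcc_of_le hab]; exact ht
      obtain ⟨s, hs, hst⟩ := intermediate_value_uIcc (hθcont.mono hsub) this
      refine ⟨s, hsub hs, ?_⟩
      show f s = Complex.exp (t * Complex.I)
      rw [← hst]
      exact (hkey s (hsub hs)).1

/-- two continuous unit-circle-valued maps on `[0,E]` with equal integrals
have intersecting ranges. -/
theorem stmt_9 (E : ℝ) (hE : 0 < E)
    (u v : ℝ → EuclideanSpace ℝ (Fin 2))
    (hu : ContinuousOn u (Set.Icc 0 E)) (hv : ContinuousOn v (Set.Icc 0 E))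
    (hu1 : ∀ s ∈ Set.Icc (0:ℝ) E, ‖u s‖ = 1) (hv1 : ∀ s ∈ Set.Icc (0:ℝ) E, ‖v s‖ = 1)
    (hint : (∫ s in (0:ℝ)..E, u s) = ∫ s in (0:ℝ)..E, v s) :
    ∃ s ∈ Set.Icc (0:ℝ) E, ∃ σ ∈ Set.Icc (0:ℝ) E, u s = v σ := by
  by_contra hcon
  push_neg at hcon
  have h0mem : (0:ℝ) ∈ Set.Icc (0:ℝ) E := Set.left_mem_Icc.2 hE.le
  set zu : ℝ → ℂ := fun s => (u s 0 : ℂ) + (u s 1 : ℂ) * Complex.I with hzu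
  set zv : ℝ → ℂ := fun s => (v s 0 : ℂ) + (v s 1 : ℂ) * Complex.I with hzv
  have habsu : ∀ s ∈ Set.Icc (0:ℝ) E, ‖zu s‖ = 1 := by
    intro s hs; rw [hzu]; simp only []; rw [abs_coords]; exact hu1 s hs
  have habsv : ∀ s ∈ Set.Icc (0:ℝ) E, ‖zv s‖ = 1 := by
    intro s hs; rw [hzv]; simp only []; rw [abs_coords]; exact hv1 s hs
  have hcu : ContinuousOn zu (Set.Icc 0 E) := by
    apply ContinuousOn.add
    · exact Complex.continuous_ofReal.comp_continuousOn
        ((EuclideanSpace.proj (0 : Fin 2)).continuous.comp_continuousOn hu)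
    · exact (Complex.continuous_ofReal.comp_continuousOn
        ((EuclideanSpace.proj (1 : Fin 2)).continuous.comp_continuousOn hu)).mul continuousOn_const
  have hcv : ContinuousOn zv (Set.Icc 0 E) := by
    apply ContinuousOn.add
    · exact Complex.continuous_ofReal.comp_continuousOn
        ((EuclideanSpace.proj (0 : Fin 2)).continuous.comp_continuousOn hv)
    · exact (Complex.continuous_ofReal.comp_continuousOn
        ((EuclideanSpace.proj (1 : Fin 2)).continuous.comp_continuousOn hv)).mul continuousOn_const
  have hdisj : ∀ s ∈ Set.Icc (0:ℝ) E, ∀ σ ∈ Set.Icc (0:ℝ) E, zu s ≠ zv σ := by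
    intro s hs σ hσ h
    apply hcon s hs σ hσ
    apply coords_ext
    · have := congrArg Complex.re h
      simpa [hzu, hzv] using this
    · have := congrArg Complex.im h
      simpa [hzu, hzv] using this
  have hp : ∃ p : ℂ, ‖p‖ = 1 ∧ p ∉ zu '' Set.Icc 0 E := by
    by_contra h
    push_neg at h
    obtain ⟨s, hs, hzs⟩ := h (zv 0) (habsv 0 h0mem)
    exact hdisj s hs 0 h0mem hzs
  have hq : ∃ q : ℂ, ‖q‖ = 1 ∧ q ∉ zv '' Set.Icc 0 E := by
    by_contra h
    push_neg at h
    obtain ⟨σ, hσ, hzs⟩ := h (zu 0) (habsu 0 h0mem)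
    exact hdisj 0 h0mem σ hσ hzs.symm
  obtain ⟨p, hp1, hp2⟩ := hp
  obtain ⟨q, hq1, hq2⟩ := hq
  obtain ⟨a, b, hab, hab2π, hImu⟩ := arc_lemma hE hcu habsu hp1 hp2
  obtain ⟨c, d, hcd, hcd2π, hImv⟩ := arc_lemma hE hcv habsv hq1 hq2
  have hUmem : ∀ t ∈ Set.Icc a b, ∃ s ∈ Set.Icc (0:ℝ) E, zu s = Complex.exp (t * Complex.I) := by
    intro t ht
    have : Complex.exp (t * Complex.I) ∈ zu '' Set.Icc 0 E := by
      rw [hImu]; exact ⟨t, ht, rfl⟩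
    obtain ⟨s, hs, h⟩ := this
    exact ⟨s, hs, h⟩
  have hVmem : ∀ t ∈ Set.Icc c d, ∃ s ∈ Set.Icc (0:ℝ) E, zv s = Complex.exp (t * Complex.I) := by
    intro t ht
    have : Complex.exp (t * Complex.I) ∈ zv '' Set.Icc 0 E := by
      rw [hImv]; exact ⟨t, ht, rfl⟩
    obtain ⟨s, hs, h⟩ := this
    exact ⟨s, hs, h⟩
  have hUrep : ∀ s ∈ Set.Icc (0:ℝ) E, ∃ t ∈ Set.Icc a b, zu s = Complex.exp (t * Complex.I) := by
    intro s hs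
    have : zu s ∈ (fun t : ℝ => Complex.exp (t * Complex.I)) '' Set.Icc a b := by
      rw [← hImu]; exact ⟨s, hs, rfl⟩
    obtain ⟨t, ht, h⟩ := this
    exact ⟨t, ht, h.symm⟩
  have hVrep : ∀ s ∈ Set.Icc (0:ℝ) E, ∃ t ∈ Set.Icc c d, zv s = Complex.exp (t * Complex.I) := by
    intro s hs
    have : zv s ∈ (fun t : ℝ => Complex.exp (t * Complex.I)) '' Set.Icc c d := by
      rw [← hImv]; exact ⟨s, hs, rfl⟩
    obtain ⟨t, ht, h⟩ := this
    exact ⟨t, ht, h.symm⟩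
  have hsep : ∀ t ∈ Set.Icc a b, ∀ t' ∈ Set.Icc c d,
      Complex.exp ((t:ℂ) * Complex.I) ≠ Complex.exp ((t':ℂ) * Complex.I) := by
    intro t ht t' ht' h
    obtain ⟨s, hs, h1⟩ := hUmem t ht
    obtain ⟨σ, hσ, h2⟩ := hVmem t' ht'
    exact hdisj s hs σ hσ (by rw [h1, h2, ← h])
  have hπ : (0:ℝ) < 2 * π := by positivity
  have hper : ∀ (t : ℝ) (n : ℤ),
      Complex.exp (((t + 2*π*n : ℝ) : ℂ) * Complex.I) = Complex.exp ((t:ℂ) * Complex.I) := by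
    intro t n
    push_cast
    rw [add_mul, Complex.exp_add]
    have h1 : ((2:ℂ) * π * n * Complex.I) = (n : ℂ) * (2 * π * Complex.I) := by ring
    rw [h1, Complex.exp_int_mul_two_pi_mul_I, mul_one]
  set k : ℤ := ⌈(b - c) / (2*π)⌉ with hk
  have hceil1 : (b - c) / (2*π) ≤ (k:ℝ) := Int.le_ceil _
  have hceil2 : (k:ℝ) < (b - c) / (2*π) + 1 := Int.ceil_lt_add_one _
  have hdm : (b - c) / (2*π) * (2*π) = b - c := div_mul_cancel₀ _ hπ.ne'
  have hbc' : b ≤ c + 2*π*k := by nlinarith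
  have hc'b : c + 2*π*k < b + 2*π := by nlinarith
  have hbc'' : b < c + 2*π*k := by
    rcases lt_or_eq_of_le hbc' with h | h
    · exact h
    · exfalso
      apply hsep b ⟨hab, le_rfl⟩ c ⟨le_rfl, hcd⟩
      rw [← hper c k, ← h]
  have hc'a : c + 2*π*k < a + 2*π := by
    by_contra h
    push_neg at h
    apply hsep (c + 2*π*k - 2*π) ⟨by linarith, by linarith⟩ c ⟨le_rfl, hcd⟩
    have he : c + 2*π*k - 2*π = c + 2*π*((k-1 : ℤ):ℝ) := by push_cast; ring
    rw [he]
    exact hper c (k-1)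
  have hd'a : d + 2*π*k < a + 2*π := by
    by_contra h
    push_neg at h
    apply hsep a ⟨le_rfl, hab⟩ (a + 2*π - 2*π*k) ⟨by linarith, by linarith⟩
    have he : a + 2*π - 2*π*k = a + 2*π*((1-k : ℤ):ℝ) := by push_cast; ring
    rw [he, hper a (1-k)]
  set ψ : ℝ := (a+b)/2 with hψ
  set r : ℝ := (b-a)/2 with hr
  have hr0 : 0 ≤ r := by rw [hr]; linarith
  have hLu : ∀ s ∈ Set.Icc (0:ℝ) E,
      Real.cos r ≤ Real.cos ψ * u s 0 + Real.sin ψ * u s 1 := by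
    intro s hs
    obtain ⟨t, ht, hts⟩ := hUrep s hs
    have h0 : u s 0 = Real.cos t := by
      have := congrArg Complex.re hts
      simpa [hzu, Complex.exp_ofReal_mul_I_re] using this
    have h1 : u s 1 = Real.sin t := by
      have := congrArg Complex.im hts
      simpa [hzu, Complex.exp_ofReal_mul_I_im] using this
    rw [h0, h1]
    have hcs : Real.cos ψ * Real.cos t + Real.sin ψ * Real.sin t = Real.cos (t - ψ) := by
      rw [Real.cos_sub]; ring
    rw [hcs, ← Real.cos_abs (t - ψ)]
    apply Real.cos_le_cos_of_nonneg_of_le_pi (abs_nonneg _) (by rw [hr]; linarith)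
    rw [abs_le]
    constructor <;> (rw [hr, hψ]; cases' ht with ht1 ht2; linarith)
  have hLv : ∀ s ∈ Set.Icc (0:ℝ) E,
      Real.cos ψ * v s 0 + Real.sin ψ * v s 1 < Real.cos r := by
    intro s hs
    obtain ⟨t, ht, hts⟩ := hVrep s hs
    have h0 : v s 0 = Real.cos t := by
      have := congrArg Complex.re hts
      simpa [hzv, Complex.exp_ofReal_mul_I_re] using this
    have h1 : v s 1 = Real.sin t := by
      have := congrArg Complex.im hts
      simpa [hzv, Complex.exp_ofReal_mul_I_im] using this
    rw [h0, h1]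
    have hcs : Real.cos ψ * Real.cos t + Real.sin ψ * Real.sin t = Real.cos (t - ψ) := by
      rw [Real.cos_sub]; ring
    rw [hcs]
    have hshift : Real.cos (t - ψ) = Real.cos (t + 2*π*k - ψ) := by
      have he : t + 2*π*k - ψ = (t - ψ) + (k:ℝ) * (2*π) := by ring
      rw [he, Real.cos_add_int_mul_two_pi]
    rw [hshift]
    apply cos_sep' hr0
    · rw [hr, hψ]; cases' ht with ht1 ht2; linarith
    · rw [hr, hψ]; cases' ht with ht1 ht2; linarith
  -- integral contradiction
  set L : EuclideanSpace ℝ (Fin 2) →L[ℝ] ℝ :=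
    Real.cos ψ • EuclideanSpace.proj (0:Fin 2) + Real.sin ψ • EuclideanSpace.proj (1:Fin 2)
    with hL
  have hLapp : ∀ x : EuclideanSpace ℝ (Fin 2), L x = Real.cos ψ * x 0 + Real.sin ψ * x 1 := by
    intro x; rw [hL]; simp [EuclideanSpace.proj]
  have hintu : IntervalIntegrable u MeasureTheory.volume 0 E :=
    (by rwa [Set.uIcc_of_le hE.le] : ContinuousOn u (Set.uIcc 0 E)).intervalIntegrable
  have hintv : IntervalIntegrable v MeasureTheory.volume 0 E :=
    (by rwa [Set.uIcc_of_le hE.le] : ContinuousOn v (Set.uIcc 0 E)).intervalIntegrable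
  have h1 : (∫ s in (0:ℝ)..E, L (u s)) = L (∫ s in (0:ℝ)..E, u s) :=
    L.intervalIntegral_comp_comm hintu
  have h2 : (∫ s in (0:ℝ)..E, L (v s)) = L (∫ s in (0:ℝ)..E, v s) :=
    L.intervalIntegral_comp_comm hintv
  have heq : (∫ s in (0:ℝ)..E, L (u s)) = ∫ s in (0:ℝ)..E, L (v s) := by
    rw [h1, h2, hint]
  have hcontLu : ContinuousOn (fun s => L (u s)) (Set.Icc 0 E) :=
    L.continuous.comp_continuousOn hu
  have hcontLv : ContinuousOn (fun s => L (v s)) (Set.Icc 0 E) :=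
    L.continuous.comp_continuousOn hv
  have hge : E * Real.cos r ≤ ∫ s in (0:ℝ)..E, L (u s) := by
    have hc : (∫ _ in (0:ℝ)..E, Real.cos r) = E * Real.cos r := by
      simp [intervalIntegral.integral_const]
    rw [← hc]
    apply intervalIntegral.integral_mono_on hE.le intervalIntegrable_const
      ((by rwa [Set.uIcc_of_le hE.le] : ContinuousOn (fun s => L (u s))
        (Set.uIcc 0 E)).intervalIntegrable)
    intro x hx
    rw [hLapp]
    exact hLu x hx
  have hlt : (∫ s in (0:ℝ)..E, L (v s)) < E * Real.cos r := by
    have hc : (∫ _ in (0:ℝ)..E, Real.cos r) = E * Real.cos r := by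
      simp [intervalIntegral.integral_const]
    rw [← hc]
    apply intervalIntegral.integral_lt_integral_of_continuousOn_of_le_of_exists_lt hE
      hcontLv continuousOn_const
    · intro x hx
      rw [hLapp]
      exact (hLv x (Set.Ioc_subset_Icc_self hx)).le
    · refine ⟨0, h0mem, ?_⟩
      rw [hLapp]
      exact hLv 0 h0mem
  linarith
end

section
/- Let n ≥ 2, k ≥ 1, and let c : ℝ → ℝⁿ be a 2π-periodic map of class C^k with |c(x)| = 1 for all x, such that 0 lies in the interior of the convex hull of the range of c. Then there exist L > 0 and an L-periodic map a : ℝ → ℝⁿ of class C^k such that |a'(x)| = 1 for all x and range(a') = range(c); that is, c can be realized as the set of unit tangent vectors of a closed curve a parametrized by arclength. -/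
open Real Set Finset Metric Pointwise intervalIntegral

noncomputable section

namespace Stmt11Aux

variable (lam u : ℕ → ℝ)

/-- Block start times for the staircase reparametrization. -/
def OO (j : ℕ) : ℝ := 1 + j + ∑ i ∈ Finset.range j, lam i

/-- Transition start times. -/
def oo (j : ℕ) : ℝ := OO lam j + lam j

/-- The staircase profile on a fundamental domain. -/
def psi (M : ℕ) (t : ℝ) : ℝ :=
  ∑ j ∈ Finset.range M, (u (j + 1) - u j) * Real.smoothTransition (t - oo lam j)

/-- The period. -/
def LL (M : ℕ) : ℝ := OO lam M + 1

/-- The globally defined reparametrization. -/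
def phi (M : ℕ) (t : ℝ) : ℝ :=
  u 0 + 2 * Real.pi * (⌊t / LL lam M⌋ : ℝ) + psi lam u M (t - (⌊t / LL lam M⌋ : ℝ) * LL lam M)

variable {lam u}

theorem OO_succ (hlam : ∀ i, 0 ≤ lam i) (j : ℕ) : OO lam (j + 1) = oo lam j + 1 := by
  simp [OO, oo, Finset.sum_range_succ]; push_cast; ring

theorem OO_mono (hlam : ∀ i, 0 ≤ lam i) {i j : ℕ} (h : i ≤ j) : OO lam i ≤ OO lam j := by
  unfold OO
  have h1 : (i:ℝ) ≤ j := by exact_mod_cast h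
  have h2 : ∑ i' ∈ Finset.range i, lam i' ≤ ∑ i' ∈ Finset.range j, lam i' :=
    Finset.sum_le_sum_of_subset_of_nonneg (Finset.range_subset_range.2 h) (fun i' _ _ => hlam i')
  linarith

theorem one_le_OO (hlam : ∀ i, 0 ≤ lam i) (j : ℕ) : 1 ≤ OO lam j := by
  have h0 : OO lam 0 = 1 := by simp [OO]
  simpa [h0] using OO_mono hlam (Nat.zero_le j)

theorem OO_le_oo (hlam : ∀ i, 0 ≤ lam i) (j : ℕ) : OO lam j ≤ oo lam j := by
  have := hlam j; simp [oo]; linarith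

theorem oo_add_one_le (hlam : ∀ i, 0 ≤ lam i) {i j : ℕ} (h : i < j) :
    oo lam i + 1 ≤ OO lam j := by
  rw [← OO_succ hlam]; exact OO_mono hlam h

theorem psi_eval (M j₀ : ℕ) (t : ℝ)
    (h1 : ∀ i, i < j₀ → oo lam i + 1 ≤ t)
    (h2 : ∀ i, j₀ ≤ i → i < M → t ≤ oo lam i) (hj₀ : j₀ ≤ M) :
    psi lam u M t = u j₀ - u 0 := by
  unfold psi
  rw [← Finset.sum_range_add_sum_Ico _ hj₀]
  have hA : ∑ j ∈ Finset.range j₀, (u (j + 1) - u j) * Real.smoothTransition (t - oo lam j)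
      = ∑ j ∈ Finset.range j₀, (u (j + 1) - u j) := by
    refine Finset.sum_congr rfl fun j hj => ?_
    rw [Real.smoothTransition.one_of_one_le (by
      have := h1 j (Finset.mem_range.1 hj); linarith), mul_one]
  have hB : ∑ j ∈ Finset.Ico j₀ M, (u (j + 1) - u j) * Real.smoothTransition (t - oo lam j)
      = 0 := by
    refine Finset.sum_eq_zero fun j hj => ?_
    rw [Finset.mem_Ico] at hj
    rw [Real.smoothTransition.zero_of_nonpos (by
      have := h2 j hj.1 hj.2; linarith), mul_zero]
  rw [hA, hB, Finset.sum_range_sub u j₀, add_zero]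

theorem psi_of_le_one (hlam : ∀ i, 0 ≤ lam i) (M : ℕ) {t : ℝ} (ht : t ≤ 1) :
    psi lam u M t = 0 := by
  have := psi_eval (u := u) M 0 t (by omega) (fun i _ _ => by
    have h1 := one_le_OO hlam i
    have h2 := OO_le_oo hlam i
    linarith) (Nat.zero_le M)
  simpa using this

theorem psi_of_top (hlam : ∀ i, 0 ≤ lam i) (M : ℕ) {t : ℝ} (ht : OO lam M ≤ t) :
    psi lam u M t = u M - u 0 :=
  psi_eval (u := u) M M t (fun i hi => le_trans (oo_add_one_le hlam hi) ht)
    (fun i hi1 hi2 => absurd (lt_of_le_of_lt hi1 hi2) (lt_irrefl M)) le_rfl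

theorem psi_plateau (hlam : ∀ i, 0 ≤ lam i) (M j : ℕ) (hj : j < M) {t : ℝ}
    (ht : t ∈ Set.Icc (OO lam j) (oo lam j)) :
    psi lam u M t = u j - u 0 := by
  refine psi_eval (u := u) M j t (fun i hi => le_trans (oo_add_one_le hlam hi) ht.1)
    (fun i hi1 _ => le_trans ht.2 ?_) hj.le
  have : OO lam (j + 1) ≤ OO lam (i + 1) := OO_mono hlam (by omega)
  rw [OO_succ hlam, OO_succ hlam] at this
  linarith

theorem psi_trans (hlam : ∀ i, 0 ≤ lam i) (M j : ℕ) (hj : j < M) {t : ℝ}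
    (ht : t ∈ Set.Icc (oo lam j) (oo lam j + 1)) :
    psi lam u M t = (u j - u 0)
      + (u (j + 1) - u j) * Real.smoothTransition (t - oo lam j) := by
  unfold psi
  rw [← Finset.sum_range_add_sum_Ico _ hj.le,
    Finset.sum_eq_sum_Ico_succ_bot hj]
  have hA : ∑ i ∈ Finset.range j, (u (i + 1) - u i) * Real.smoothTransition (t - oo lam i)
      = u j - u 0 := by
    rw [← Finset.sum_range_sub u j]
    refine Finset.sum_congr rfl fun i hi => ?_
    have h1 : oo lam i + 1 ≤ OO lam j := oo_add_one_le hlam (Finset.mem_range.1 hi)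
    have h2 : OO lam j ≤ oo lam j := OO_le_oo hlam j
    rw [Real.smoothTransition.one_of_one_le (by have := ht.1; linarith), mul_one]
  have hB : ∑ i ∈ Finset.Ico (j + 1) M, (u (i + 1) - u i) *
      Real.smoothTransition (t - oo lam i) = 0 := by
    refine Finset.sum_eq_zero fun i hi => ?_
    rw [Finset.mem_Ico] at hi
    have h1 : oo lam j + 1 ≤ OO lam i := oo_add_one_le hlam (by omega)
    have h2 : OO lam i ≤ oo lam i := OO_le_oo hlam i
    rw [Real.smoothTransition.zero_of_nonpos (by have := ht.2; linarith), mul_zero]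
  rw [hA, hB, add_zero]

theorem psi_contDiff (M : ℕ) (n : ℕ∞) : ContDiff ℝ n (psi lam u M) := by
  unfold psi
  apply ContDiff.sum
  intro j _
  exact ContDiff.mul contDiff_const
    (Real.smoothTransition.contDiff.comp (contDiff_id.sub contDiff_const))

theorem psi_continuous (M : ℕ) : Continuous (psi lam u M) :=
  (psi_contDiff (u := u) M 0).continuous

theorem two_le_LL (hlam : ∀ i, 0 ≤ lam i) (M : ℕ) : 2 ≤ LL lam M := by
  have := one_le_OO hlam M; unfold LL; linarith

theorem LL_pos (hlam : ∀ i, 0 ≤ lam i) (M : ℕ) : 0 < LL lam M := by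
  have := two_le_LL hlam M (lam := lam); linarith

theorem floor_eq (hlam : ∀ i, 0 ≤ lam i) (M : ℕ) {m : ℤ} {t : ℝ}
    (h1 : (m : ℝ) * LL lam M ≤ t) (h2 : t < (m + 1 : ℝ) * LL lam M) :
    ⌊t / LL lam M⌋ = m := by
  have hL := LL_pos hlam M (lam := lam)
  rw [Int.floor_eq_iff]
  constructor
  · rw [le_div_iff₀ hL]; linarith
  · rw [div_lt_iff₀ hL]; push_cast; linarith

/-- Local formula for `phi` around the fundamental domain of index `m`. -/
theorem phi_eq_on (hlam : ∀ i, 0 ≤ lam i) (M : ℕ) (hu : u M = u 0 + 2 * Real.pi)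
    (m : ℤ) {t : ℝ} (h1 : (m : ℝ) * LL lam M - 1 < t) (h2 : t < (m + 1 : ℝ) * LL lam M) :
    phi lam u M t = u 0 + 2 * Real.pi * (m : ℝ) + psi lam u M (t - (m : ℝ) * LL lam M) := by
  have hL := LL_pos hlam M (lam := lam)
  have hL2 := two_le_LL hlam M (lam := lam)
  rcases le_or_gt ((m : ℝ) * LL lam M) t with h | h
  · rw [phi, floor_eq hlam M h h2]
  · have hfl : ⌊t / LL lam M⌋ = m - 1 := by
      refine floor_eq hlam M ?_ ?_
      · push_cast; nlinarith
      · push_cast; linarith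
    have harg2 : t - (m : ℝ) * LL lam M ≤ 1 := by nlinarith
    rw [phi, hfl]
    push_cast
    rw [psi_of_top hlam M (by
        have : OO lam M = LL lam M - 1 := by unfold LL; ring
        rw [this]; push_cast; nlinarith),
      psi_of_le_one hlam M (by linarith), hu]
    ring

theorem phi_contDiff (hlam : ∀ i, 0 ≤ lam i) (M : ℕ) (hu : u M = u 0 + 2 * Real.pi)
    (n : ℕ∞) : ContDiff ℝ n (phi lam u M) := by
  have hL := LL_pos hlam M (lam := lam)
  rw [contDiff_iff_contDiffAt]
  intro t
  set m : ℤ := ⌊t / LL lam M⌋ with hm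
  have hf1 : (m : ℝ) ≤ t / LL lam M := Int.floor_le _
  have hf2 : t / LL lam M < (m : ℝ) + 1 := Int.lt_floor_add_one _
  have h1 : (m : ℝ) * LL lam M ≤ t := by
    nlinarith [div_mul_cancel₀ t hL.ne']
  have h2 : t < (m + 1 : ℝ) * LL lam M := by
    nlinarith [div_mul_cancel₀ t hL.ne']
  have hopen : Set.Ioo ((m : ℝ) * LL lam M - 1) ((m + 1 : ℝ) * LL lam M) ∈ nhds t :=
    Ioo_mem_nhds (by linarith) h2
  have hsm : ContDiff ℝ (n : ℕ∞) fun s : ℝ =>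
      u 0 + 2 * Real.pi * (m : ℝ) + psi lam u M (s - (m : ℝ) * LL lam M) :=
    contDiff_const.add ((psi_contDiff M n).comp (contDiff_id.sub contDiff_const))
  exact hsm.contDiffAt.congr_of_eventuallyEq
    (Filter.eventuallyEq_of_mem hopen fun s hs => phi_eq_on hlam M hu m hs.1 hs.2)

theorem phi_periodic (hlam : ∀ i, 0 ≤ lam i) (M : ℕ) (t : ℝ) :
    phi lam u M (t + LL lam M) = phi lam u M t + 2 * Real.pi := by
  have hL := LL_pos hlam M (lam := lam)
  have hfl : ⌊(t + LL lam M) / LL lam M⌋ = ⌊t / LL lam M⌋ + 1 := by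
    rw [add_div, div_self hL.ne', Int.floor_add_one]
  rw [phi, phi, hfl]
  push_cast
  have harg : t + LL lam M - ((⌊t / LL lam M⌋ : ℝ) + 1) * LL lam M
      = t - (⌊t / LL lam M⌋ : ℝ) * LL lam M := by ring
  rw [harg]; ring

theorem phi_eqOn_base (hlam : ∀ i, 0 ≤ lam i) (M : ℕ) (hu : u M = u 0 + 2 * Real.pi)
    {t : ℝ} (ht : t ∈ Set.Icc (0 : ℝ) (LL lam M)) :
    phi lam u M t = u 0 + psi lam u M t := by
  have hL := LL_pos hlam M (lam := lam)
  rcases lt_or_eq_of_le ht.2 with h | h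
  · have h1 : ((0:ℤ) : ℝ) * LL lam M - 1 < t := by push_cast; linarith [ht.1]
    have h2 : t < (((0:ℤ) : ℝ) + 1) * LL lam M := by push_cast; linarith
    have := phi_eq_on hlam M hu 0 h1 h2
    simpa using this
  · have hfl : ⌊t / LL lam M⌋ = 1 := by rw [h, div_self hL.ne']; simp
    rw [phi, hfl]
    push_cast
    rw [h]
    have h1 : psi lam u M (LL lam M - 1 * LL lam M) = 0 :=
      psi_of_le_one hlam M (by linarith)
    have h2 : psi lam u M (LL lam M) = u M - u 0 :=
      psi_of_top hlam M (by unfold LL; linarith)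
    rw [h1, h2, hu]; ring

theorem phi_zero (hlam : ∀ i, 0 ≤ lam i) (M : ℕ) (hu : u M = u 0 + 2 * Real.pi) :
    phi lam u M 0 = u 0 := by
  have hL := LL_pos hlam M (lam := lam)
  rw [phi_eqOn_base hlam M hu (by constructor <;> [rfl; linarith]),
    psi_of_le_one hlam M (by linarith), add_zero]

theorem phi_LL (hlam : ∀ i, 0 ≤ lam i) (M : ℕ) (hu : u M = u 0 + 2 * Real.pi) :
    phi lam u M (LL lam M) = u 0 + 2 * Real.pi := by
  have hL := two_le_LL hlam M (lam := lam)
  rw [phi_eqOn_base hlam M hu (by constructor <;> [linarith; rfl]),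
    psi_of_top hlam M (by unfold LL; linarith), hu]
  ring

section Integral

variable {E : Type*} [NormedAddCommGroup E] [NormedSpace ℝ E] [CompleteSpace E]
variable {g : ℝ → E}

/-- The (fixed) contribution of transition `i`. -/
def trw (u : ℕ → ℝ) (g : ℝ → E) (i : ℕ) : E :=
  ∫ s in (0:ℝ)..1, g (u i + (u (i + 1) - u i) * Real.smoothTransition s)

theorem integral_key (hg : Continuous g) (hlam : ∀ i, 0 ≤ lam i) (M : ℕ) :
    ∀ j, j ≤ M → ∫ t in (0:ℝ)..(OO lam j), g (u 0 + psi lam u M t) =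
      g (u 0) + ∑ i ∈ Finset.range j, (lam i • g (u i) + trw u g i) := by
  have hgi : ∀ x y : ℝ, IntervalIntegrable (fun t => g (u 0 + psi lam u M t))
      MeasureTheory.volume x y :=
    fun x y => (hg.comp (continuous_const.add (psi_continuous M))).intervalIntegrable x y
  intro j
  induction j with
  | zero =>
    intro _
    have h0 : OO lam 0 = 1 := by simp [OO]
    rw [h0]
    have : ∀ t ∈ Set.uIcc (0:ℝ) 1, g (u 0 + psi lam u M t) = g (u 0) := by
      intro t ht
      rw [Set.uIcc_of_le zero_le_one] at ht
      rw [psi_of_le_one hlam M ht.2, add_zero]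
    rw [intervalIntegral.integral_congr this, intervalIntegral.integral_const]
    simp
  | succ j ih =>
    intro hj1
    have hj : j < M := hj1
    have h1 : OO lam j ≤ oo lam j := OO_le_oo hlam j
    have h2 : OO lam (j + 1) = oo lam j + 1 := OO_succ hlam j
    have h0 : (0:ℝ) ≤ OO lam j := by linarith [one_le_OO hlam j]
    have hsplit1 : ∫ t in (0:ℝ)..(oo lam j), g (u 0 + psi lam u M t)
        = (∫ t in (0:ℝ)..(OO lam j), g (u 0 + psi lam u M t))
          + ∫ t in (OO lam j)..(oo lam j), g (u 0 + psi lam u M t) :=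
      (intervalIntegral.integral_add_adjacent_intervals (hgi _ _) (hgi _ _)).symm
    have hsplit2 : ∫ t in (0:ℝ)..(OO lam (j+1)), g (u 0 + psi lam u M t)
        = (∫ t in (0:ℝ)..(oo lam j), g (u 0 + psi lam u M t))
          + ∫ t in (oo lam j)..(oo lam j + 1), g (u 0 + psi lam u M t) := by
      rw [h2]
      exact (intervalIntegral.integral_add_adjacent_intervals (hgi _ _) (hgi _ _)).symm
    have hplat : ∫ t in (OO lam j)..(oo lam j), g (u 0 + psi lam u M t)
        = lam j • g (u j) := by
      have : ∀ t ∈ Set.uIcc (OO lam j) (oo lam j), g (u 0 + psi lam u M t) = g (u j) := by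
        intro t ht
        rw [Set.uIcc_of_le h1] at ht
        rw [psi_plateau hlam M j hj ht]
        ring_nf
      rw [intervalIntegral.integral_congr this, intervalIntegral.integral_const]
      congr 1
      simp [oo]
    have htrans : ∫ t in (oo lam j)..(oo lam j + 1), g (u 0 + psi lam u M t)
        = trw u g j := by
      have : ∀ t ∈ Set.uIcc (oo lam j) (oo lam j + 1),
          g (u 0 + psi lam u M t)
            = g (u j + (u (j + 1) - u j) * Real.smoothTransition (t - oo lam j)) := by
        intro t ht
        rw [Set.uIcc_of_le (by linarith)] at ht
        rw [psi_trans hlam M j hj ht]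
        ring_nf
      rw [intervalIntegral.integral_congr this]
      have hshift := intervalIntegral.integral_comp_sub_right
        (a := oo lam j) (b := oo lam j + 1)
        (fun s => g (u j + (u (j + 1) - u j) * Real.smoothTransition s)) (oo lam j)
      simp only [sub_self, add_sub_cancel_left] at hshift
      rw [hshift]
      rfl
    rw [hsplit2, hsplit1, ih hj.le, hplat, htrans, Finset.sum_range_succ]
    abel

theorem integral_total (hg : Continuous g) (hlam : ∀ i, 0 ≤ lam i) (M : ℕ) :
    ∫ t in (0:ℝ)..(LL lam M), g (u 0 + psi lam u M t)
      = g (u 0) + (∑ i ∈ Finset.range M, (lam i • g (u i) + trw u g i)) + g (u M) := by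
  have hgi : ∀ x y : ℝ, IntervalIntegrable (fun t => g (u 0 + psi lam u M t))
      MeasureTheory.volume x y :=
    fun x y => (hg.comp (continuous_const.add (psi_continuous M))).intervalIntegrable x y
  have hsplit : ∫ t in (0:ℝ)..(LL lam M), g (u 0 + psi lam u M t)
      = (∫ t in (0:ℝ)..(OO lam M), g (u 0 + psi lam u M t))
        + ∫ t in (OO lam M)..(OO lam M + 1), g (u 0 + psi lam u M t) := by
    rw [LL]
    exact (intervalIntegral.integral_add_adjacent_intervals (hgi _ _) (hgi _ _)).symm
  have hlast : ∫ t in (OO lam M)..(OO lam M + 1), g (u 0 + psi lam u M t) = g (u M) := by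
    have : ∀ t ∈ Set.uIcc (OO lam M) (OO lam M + 1), g (u 0 + psi lam u M t) = g (u M) := by
      intro t ht
      rw [Set.uIcc_of_le (by linarith)] at ht
      rw [psi_of_top hlam M ht.1]
      ring_nf
    rw [intervalIntegral.integral_congr this, intervalIntegral.integral_const]
    simp
  rw [hsplit, hlast, integral_key hg hlam M M le_rfl]

end Integral

section Convexity

variable {E : Type*} [NormedAddCommGroup E] [NormedSpace ℝ E]

theorem closedBall_subset_of_thickening {K : Set E} {ε : ℝ} (hε : 0 < ε)
    (hK : Convex ℝ K) (hKc : IsClosed K)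
    (hsub : Metric.ball (0 : E) ε ⊆ K + Metric.closedBall (0 : E) (ε / 4)) :
    Metric.closedBall (0 : E) (ε / 4) ⊆ K := by
  intro y hy
  rw [Metric.mem_closedBall, dist_zero_right] at hy
  by_contra hyK
  obtain ⟨f, w, hfw, hwy⟩ := geometric_hahn_banach_closed_point hK hKc hyK
  obtain ⟨C, hC⟩ : ∃ C : ℝ, C = w + ‖f‖ * (ε / 4) := ⟨_, rfl⟩
  have hfb : ∀ z : E, ‖z‖ < ε → f z ≤ C := by
    intro z hz
    obtain ⟨p, hp, q, hq, rfl⟩ := hsub (by rwa [Metric.mem_ball, dist_zero_right])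
    rw [Metric.mem_closedBall, dist_zero_right] at hq
    have h1 : f p < w := hfw p hp
    have h2 : f q ≤ ‖f‖ * (ε / 4) := by
      calc f q ≤ ‖f q‖ := le_abs_self _
        _ ≤ ‖f‖ * ‖q‖ := f.le_opNorm q
        _ ≤ ‖f‖ * (ε / 4) := by
            have := norm_nonneg f
            nlinarith
    rw [map_add]
    rw [hC]
    linarith
  have hC0 : 0 ≤ C := by
    have := hfb 0 (by simpa using hε)
    simpa using this
  have habs : ∀ z : E, ‖z‖ ≤ ε / 2 → ‖f z‖ ≤ C := by
    intro z hz
    rw [Real.norm_eq_abs, abs_le]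
    constructor
    · have := hfb (-z) (by rw [norm_neg]; linarith)
      rw [map_neg] at this
      linarith
    · exact hfb z (by linarith)
  have hop : ‖f‖ ≤ C / (ε / 2) := by
    refine f.opNorm_le_bound (by positivity) (fun x => ?_)
    rcases eq_or_ne x 0 with rfl | hx
    · simp
    · have hxn : 0 < ‖x‖ := norm_pos_iff.2 hx
      set z : E := (ε / 2 / ‖x‖) • x with hzdef
      have hzn : ‖z‖ = ε / 2 := by
        rw [hzdef, norm_smul, Real.norm_eq_abs, abs_of_pos (by positivity)]
        field_simp
      have := habs z hzn.le
      rw [hzdef, map_smul, norm_smul, Real.norm_eq_abs, abs_of_pos (by positivity)] at this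
      rw [div_mul_eq_mul_div, le_div_iff₀ (by positivity)]
      calc ‖f x‖ * (ε / 2) = ε / 2 / ‖x‖ * ‖f x‖ * ‖x‖ := by
            field_simp
        _ ≤ C * ‖x‖ := by nlinarith
  have hfne : ‖f‖ ≠ 0 := by
    intro h0
    have hf0 : f = 0 := by
      ext x; simpa using le_antisymm (by
        have := f.le_opNorm x
        rw [h0] at this
        simpa using le_trans (le_abs_self _) (by simpa using this)) (by
        have := f.le_opNorm (-x)
        rw [h0] at this
        simp only [map_neg, zero_mul] at this
        have : ‖f (-x)‖ ≤ 0 := by simpa using this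
        have h2 : -f x ≤ 0 := le_trans (le_abs_self _) (by simpa [Real.norm_eq_abs] using this)
        linarith)
    rw [hf0] at hwy hfw
    simp only [ContinuousLinearMap.zero_apply] at hwy
    have : (0:ℝ) ≤ C := hC0
    rw [hC, h0] at this
    simp at this
    linarith
  have hfpos : 0 < ‖f‖ := lt_of_le_of_ne (norm_nonneg f) (Ne.symm hfne)
  have key : ‖f‖ * (ε / 4) ≤ w := by
    have := (le_div_iff₀ (by positivity : (0:ℝ) < ε / 2)).1 hop
    rw [hC] at this
    nlinarith
  have : w < ‖f‖ * ‖y‖ :=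
    lt_of_lt_of_le hwy (le_trans (le_abs_self _) (f.le_opNorm y))
  nlinarith

theorem cone_surj {M : ℕ} (hM : 0 < M) (v : Fin M → E) {r : ℝ} (hr : 0 < r)
    (hull : Metric.closedBall (0 : E) r ⊆ convexHull ℝ (Set.range v)) (y : E) :
    ∃ μ : Fin M → ℝ, (∀ j, 0 ≤ μ j) ∧ ∑ j, μ j • v j = y := by
  haveI : Nonempty (Fin M) := ⟨⟨0, hM⟩⟩
  rcases eq_or_ne y 0 with rfl | hy
  · exact ⟨0, fun j => le_rfl, by simp⟩
  · have hyn : 0 < ‖y‖ := norm_pos_iff.2 hy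
    set z : E := (r / ‖y‖) • y with hzdef
    have hz : z ∈ convexHull ℝ (Set.range v) := by
      apply hull
      rw [Metric.mem_closedBall, dist_zero_right, hzdef, norm_smul, Real.norm_eq_abs,
        abs_of_pos (by positivity)]
      field_simp
      exact le_rfl
    rw [_root_.convexHull_eq] at hz
    obtain ⟨ι, t, wt, zf, hw0, hw1, hzs, hcm⟩ := hz
    have hch : ∀ i : ι, i ∈ t → ∃ j : Fin M, v j = zf i := fun i hi => hzs i hi
    classical
    set jfun : ι → Fin M := fun i =>
      if h : ∃ j : Fin M, v j = zf i then h.choose else Classical.arbitrary _ with hjf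
    refine ⟨fun j => (‖y‖ / r) * ∑ i ∈ t.filter (fun i => jfun i = j), wt i, ?_, ?_⟩
    · intro j
      have : (0:ℝ) ≤ ∑ i ∈ t.filter (fun i => jfun i = j), wt i :=
        Finset.sum_nonneg fun i hi => hw0 i (Finset.mem_filter.1 hi).1
      positivity
    · have hsum : ∑ j : Fin M, (∑ i ∈ t.filter (fun i => jfun i = j), wt i) • v j
          = ∑ i ∈ t, wt i • zf i := by
        have : ∀ j : Fin M, (∑ i ∈ t.filter (fun i => jfun i = j), wt i) • v j
            = ∑ i ∈ t.filter (fun i => jfun i = j), wt i • zf i := by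
          intro j
          rw [Finset.sum_smul]
          refine Finset.sum_congr rfl fun i hi => ?_
          obtain ⟨hit, hij⟩ := Finset.mem_filter.1 hi
          have hex : ∃ j : Fin M, v j = zf i := hch i hit
          have : v (jfun i) = zf i := by rw [hjf]; simp only [dif_pos hex]; exact hex.choose_spec
          rw [← hij, this]
        rw [Finset.sum_congr rfl fun j _ => this j]
        exact Finset.sum_fiberwise t jfun (fun i => wt i • zf i)
      have hcm' : ∑ i ∈ t, wt i • zf i = z := by
        rw [← hcm, Finset.centerMass, hw1, inv_one, one_smul]
      have hmul : ∀ j : Fin M,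
          ((‖y‖ / r) * ∑ i ∈ t.filter (fun i => jfun i = j), wt i) • v j
            = (‖y‖ / r) • ((∑ i ∈ t.filter (fun i => jfun i = j), wt i) • v j) :=
        fun j => mul_smul _ _ _
      rw [Finset.sum_congr rfl fun j _ => hmul j, ← Finset.smul_sum, hsum, hcm', hzdef,
        smul_smul]
      have hone : ‖y‖ / r * (r / ‖y‖) = 1 := by field_simp
      rw [hone, one_smul]

end Convexity

end Stmt11Aux

end

open Real Set Finset Metric Pointwise intervalIntegral Stmt11Aux

/-- any closed `C^k` curve `c` on the unit sphere `S^{n−1}` whose convex hull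
contains a neighborhood of the origin is the set of unit tangent vectors of some closed
curve `a` parametrized by arclength: there are `L > 0` and an `L`-periodic `C^k` map
`a` with `|a'| ≡ 1` and `range(a') = range(c)`. -/
theorem stmt_11 (n : ℕ) (hn : 2 ≤ n) (k : ℕ) (hk : 1 ≤ k)
    (c : ℝ → EuclideanSpace ℝ (Fin n))
    (hc : ContDiff ℝ k c) (hcper : Function.Periodic c (2 * Real.pi))
    (hc1 : ∀ x, ‖c x‖ = 1)
    (hhull : (0 : EuclideanSpace ℝ (Fin n)) ∈ interior (convexHull ℝ (Set.range c))) :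
    ∃ L > (0:ℝ), ∃ a : ℝ → EuclideanSpace ℝ (Fin n),
      Function.Periodic a L ∧ ContDiff ℝ k a ∧
      (∀ x, ‖deriv a x‖ = 1) ∧ Set.range (deriv a) = Set.range c := by
  classical
  have h2π : (0:ℝ) < 2 * Real.pi := by positivity
  -- Step 1: a ball inside the convex hull
  obtain ⟨ε, hε, hball⟩ :=
    Metric.mem_nhds_iff.1 (mem_interior_iff_mem_nhds.1 hhull)
  -- Step 2: a finite net in the range of c
  have hrangeeq : c '' Set.Icc 0 (0 + 2 * Real.pi) = Set.range c := hcper.image_Icc h2π 0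
  have hcomp : IsCompact (Set.range c) := by
    rw [← hrangeeq]; exact (isCompact_Icc.image hc.continuous)
  have hent : {p : EuclideanSpace ℝ (Fin n) × EuclideanSpace ℝ (Fin n) | dist p.1 p.2 < ε / 4} ∈ uniformity (EuclideanSpace ℝ (Fin n)) :=
    Metric.dist_mem_uniformity (by positivity)
  obtain ⟨s₀, hs₀sub, hs₀fin, hcover⟩ := totallyBounded_iff_subset.1 hcomp.totallyBounded _ hent
  -- Step 3: ball inside the hull of the net
  have hKconv : Convex ℝ (convexHull ℝ s₀) := convex_convexHull ℝ s₀
  have hKclosed : IsClosed (convexHull ℝ s₀) := (hs₀fin.isCompact_convexHull (𝕜 := ℝ)).isClosed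
  have hthick : Metric.ball (0:EuclideanSpace ℝ (Fin n)) ε ⊆ convexHull ℝ s₀ + Metric.closedBall (0:EuclideanSpace ℝ (Fin n)) (ε/4) := by
    intro z hz
    have hz' : z ∈ convexHull ℝ (Set.range c) := hball hz
    have hsub2 : Set.range c ⊆ convexHull ℝ s₀ + Metric.closedBall (0:EuclideanSpace ℝ (Fin n)) (ε/4) := by
      intro x hx
      obtain ⟨y, hy, hxy⟩ := Set.mem_iUnion₂.1 (hcover hx)
      refine Set.mem_add.2 ⟨y, subset_convexHull ℝ s₀ hy, x - y, ?_, by abel⟩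
      rw [Metric.mem_closedBall, dist_zero_right]
      have : dist x y < ε / 4 := hxy
      rw [dist_eq_norm] at this
      linarith
    exact convexHull_min hsub2 (hKconv.add (convex_closedBall 0 (ε/4))) hz'
  have hball4 : Metric.closedBall (0:EuclideanSpace ℝ (Fin n)) (ε/4) ⊆ convexHull ℝ s₀ :=
    closedBall_subset_of_thickening hε hKconv hKclosed hthick
  -- Step 4: enumerate the net
  have hne : s₀.Nonempty := by
    obtain ⟨y, hy, -⟩ := Set.mem_iUnion₂.1 (hcover ⟨0, rfl⟩)
    exact ⟨y, hy⟩
  set M : ℕ := hs₀fin.toFinset.card with hMdef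
  have hM : 0 < M := by
    rw [hMdef, Finset.card_pos, Set.Finite.toFinset_nonempty]
    exact hne
  set v : Fin M → EuclideanSpace ℝ (Fin n) := fun j => ((hs₀fin.toFinset.equivFin.symm j : hs₀fin.toFinset) : EuclideanSpace ℝ (Fin n))
    with hvdef
  have hrangev : Set.range v = s₀ := by
    have h1 : Set.range v = Subtype.val '' Set.range (⇑hs₀fin.toFinset.equivFin.symm) :=
      Set.range_comp _ _
    rw [h1, Equiv.range_eq_univ, Set.image_univ, Subtype.range_coe_subtype]
    ext x
    simp [Set.Finite.mem_toFinset]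
  have hvc : ∀ j : Fin M, ∃ x : ℝ, c x = v j := by
    intro j
    have : v j ∈ s₀ := by rw [← hrangev]; exact Set.mem_range_self j
    exact hs₀sub this
  set τ : Fin M → ℝ := fun j => (hvc j).choose with hτdef
  have hτ : ∀ j : Fin M, c (τ j) = v j := fun j => (hvc j).choose_spec
  -- the value sequence
  set u : ℕ → ℝ := fun j => if h : j < M then τ ⟨j, h⟩ else τ ⟨0, hM⟩ + 2 * Real.pi
    with hudef
  have hu0 : u 0 = τ ⟨0, hM⟩ := by rw [hudef]; simp [hM]
  have huM : u M = u 0 + 2 * Real.pi := by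
    rw [hudef]; simp [lt_irrefl, hu0, hudef, hM]
  have hcu : ∀ (j : ℕ) (h : j < M), c (u j) = v ⟨j, h⟩ := by
    intro j h
    rw [hudef]
    simp only [dif_pos h]
    exact hτ _
  -- Step 5: choose the pause lengths
  set W : EuclideanSpace ℝ (Fin n) := c (u 0) + (∑ i ∈ Finset.range M, trw u c i) + c (u M) with hWdef
  obtain ⟨μ, hμ0, hμsum⟩ := cone_surj hM v (by positivity : (0:ℝ) < ε/4)
    (by rw [hrangev]; exact hball4) (-W)
  set lam : ℕ → ℝ := fun i => if h : i < M then μ ⟨i, h⟩ else 0 with hlamdef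
  have hlam : ∀ i, 0 ≤ lam i := by
    intro i
    rw [hlamdef]
    by_cases h : i < M
    · simpa [h] using hμ0 ⟨i, h⟩
    · simp [h]
  -- the curve data
  set L : ℝ := LL lam M with hLdef
  have hLpos : 0 < L := LL_pos hlam M
  set Φ : ℝ → ℝ := phi lam u M with hΦdef
  set b : ℝ → EuclideanSpace ℝ (Fin n) := fun t => c (Φ t) with hbdef
  have hΦk : ∀ m : ℕ∞, ContDiff ℝ m Φ := fun m => phi_contDiff hlam M huM m
  have hΦcont : Continuous Φ := (hΦk 0).continuous
  have hbcont : Continuous b := hc.continuous.comp hΦcont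
  have hbper : Function.Periodic b L := by
    intro t
    rw [hbdef]
    simp only
    rw [hΦdef, hLdef, phi_periodic hlam M t]
    exact hcper (phi lam u M t)
  -- the integral over one period vanishes
  have hint0 : ∫ t in (0:ℝ)..L, b t = 0 := by
    have hcongr : ∀ t ∈ Set.uIcc (0:ℝ) L, b t = c (u 0 + psi lam u M t) := by
      intro t ht
      rw [Set.uIcc_of_le hLpos.le] at ht
      rw [hbdef]
      simp only
      rw [hΦdef, phi_eqOn_base hlam M huM ht]
    rw [intervalIntegral.integral_congr hcongr,
      integral_total hc.continuous hlam M]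
    have hsum : ∑ i ∈ Finset.range M, (lam i • c (u i) + trw u c i)
        = (∑ j : Fin M, μ j • v j) + ∑ i ∈ Finset.range M, trw u c i := by
      rw [Finset.sum_add_distrib]
      congr 1
      rw [← Fin.sum_univ_eq_sum_range (fun i => lam i • c (u i)) M]
      refine Finset.sum_congr rfl fun j _ => ?_
      have h1 : lam (j : ℕ) = μ j := by
        rw [hlamdef]; simp only [dif_pos j.isLt]
      have h2 : c (u (j : ℕ)) = v j := by
        rw [hcu _ j.isLt]
      rw [h1, h2]
    rw [hsum, hμsum]
    rw [hWdef]
    abel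
  -- the closed curve
  set a : ℝ → EuclideanSpace ℝ (Fin n) := fun x => ∫ t in (0:ℝ)..x, b t with hadef
  have hderiv : ∀ x, HasDerivAt a (b x) x :=
    fun x => (hbcont.integral_hasStrictDerivAt 0 x).hasDerivAt
  have hderiv_eq : deriv a = b := funext fun x => (hderiv x).deriv
  refine ⟨L, hLpos, a, ?_, ?_, ?_, ?_⟩
  · -- periodic
    intro x
    have hsplit : a (x + L) = a x + ∫ t in x..(x + L), b t := by
      rw [hadef]
      simp only
      exact (intervalIntegral.integral_add_adjacent_intervals
        (hbcont.intervalIntegrable _ _) (hbcont.intervalIntegrable _ _)).symm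
    have hshift : ∫ t in x..(x + L), b t = ∫ t in (0:ℝ)..(0 + L), b t :=
      hbper.intervalIntegral_add_eq x 0
    rw [hsplit, hshift, zero_add, hint0, add_zero]
  · -- smoothness
    have hbk : ContDiff ℝ (k : ℕ∞) b := hc.comp (hΦk k)
    have h1 : ContDiff ℝ ((k : WithTop ℕ∞) + 1) a := by
      rw [contDiff_succ_iff_deriv]
      refine ⟨fun x => (hderiv x).differentiableAt, ?_, ?_⟩
      · intro h
        exact absurd h (by
          simp only [← WithTop.coe_natCast]
          exact WithTop.coe_ne_top)
      · rw [hderiv_eq]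
        exact_mod_cast hbk
    exact (h1.of_le le_self_add)
  · -- unit speed
    intro x
    rw [hderiv_eq]
    exact hc1 (Φ x)
  · -- range of the derivative
    rw [hderiv_eq]
    apply Set.Subset.antisymm
    · rintro p ⟨t, rfl⟩
      exact ⟨Φ t, rfl⟩
    · rintro p ⟨x, rfl⟩
      set m : ℤ := ⌈(u 0 - x) / (2 * Real.pi)⌉ with hmdef
      set y : ℝ := x + (m : ℝ) * (2 * Real.pi) with hydef
      have hy1 : u 0 ≤ y := by
        have := Int.le_ceil ((u 0 - x) / (2 * Real.pi))
        rw [div_le_iff₀ h2π] at this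
        rw [hydef]; linarith
      have hy2 : y ≤ u 0 + 2 * Real.pi := by
        have h := Int.ceil_lt_add_one ((u 0 - x) / (2 * Real.pi))
        rw [← hmdef] at h
        have h' : (u 0 - x) / (2 * Real.pi) * (2 * Real.pi) = u 0 - x :=
          div_mul_cancel₀ _ h2π.ne'
        rw [hydef]
        nlinarith
      have hyIcc : y ∈ Set.Icc (Φ 0) (Φ L) := by
        rw [hΦdef, hLdef, phi_zero hlam M huM, phi_LL hlam M huM]
        exact ⟨hy1, hy2⟩
      obtain ⟨t, htIcc, htval⟩ := intermediate_value_Icc hLpos.le hΦcont.continuousOn hyIcc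
      refine ⟨t, ?_⟩
      rw [hbdef]
      simp only
      rw [htval, hydef]
      exact (hcper.int_mul m) x
end

section
/- Let a, b : ℝ → ℝ² be of class C¹ with |a'(s)| = |b'(s)| = 1 for all s, with a' and b' periodic with period E₀ > 0 and ∫₀^{E₀}(a' + b') = 0. Then at least one of the following holds: (i) there exists t₀ ∈ ℝ such that a'(x + t₀) + b'(x − t₀) = 0 for all x ∈ ℝ; or (ii) the set {t ∈ ℝ : there exists x ∈ ℝ with a'(x+t) + b'(x−t) = 0} contains a nonempty open interval. -/
open Complex Set intervalIntegral

noncomputable section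
namespace Stmt16


/-- A continuous function taking values in `2πℤ` on an order-connected set is constant there. -/
lemma int_valued_const {f : ℝ → ℝ} {s : Set ℝ} (hs : s.OrdConnected)
    (hf : ContinuousOn f s) (h : ∀ x ∈ s, ∃ k : ℤ, f x = k * (2 * Real.pi))
    {x y : ℝ} (hx : x ∈ s) (hy : y ∈ s) : f x = f y := by
  by_contra hne
  wlog hlt : f x < f y generalizing x y
  · exact this hy hx (Ne.symm hne) (lt_of_le_of_ne (not_lt.1 hlt) (Ne.symm hne))
  obtain ⟨kx, hkx⟩ := h x hx
  obtain ⟨ky, hky⟩ := h y hy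
  have hpi : (0:ℝ) < Real.pi := Real.pi_pos
  have hklt : kx < ky := by
    rw [hkx, hky] at hlt
    exact_mod_cast lt_of_mul_lt_mul_right hlt (by positivity)
  have hmem : f x + Real.pi ∈ Set.uIcc (f x) (f y) := by
    rw [Set.uIcc_of_le hlt.le]
    constructor
    · linarith
    · rw [hkx, hky]
      have : (kx : ℝ) + 1 ≤ ky := by exact_mod_cast hklt
      nlinarith
  have hsub : Set.uIcc x y ⊆ s := hs.uIcc_subset hx hy
  obtain ⟨z, hz, hfz⟩ := intermediate_value_uIcc (hf.mono hsub) hmem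
  obtain ⟨kz, hkz⟩ := h z (hsub hz)
  rw [hkz, hkx] at hfz
  have : (kz : ℝ) * 2 = kx * 2 + 1 := by nlinarith
  have : (kz : ℤ) * 2 = kx * 2 + 1 := by exact_mod_cast this
  omega

lemma unit_mem_slitPlane {z w : ℂ} (hz : ‖z‖ = 1) (hng : ‖w - z‖ < 1) :
    w / z ∈ Complex.slitPlane := by
  have hz0 : z ≠ 0 := by intro h; rw [h] at hz; simp at hz
  have h1 : ‖w / z - 1‖ < 1 := by
    have : w / z - 1 = (w - z) / z := by field_simp
    rw [this, norm_div, hz, div_one]; exact hng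
  have hre : |(w / z - 1).re| < 1 := lt_of_le_of_lt (Complex.abs_re_le_norm _) h1
  have : 0 < (w / z).re := by
    have : (w / z - 1).re = (w / z).re - 1 := by simp
    rw [this] at hre
    have := abs_lt.1 hre
    linarith [this.1]
  exact Or.inl this

lemma exp_arg_unit {z w : ℂ} (hz : ‖z -0‖ = 1) (hw : ‖w‖ = 1) :
    Complex.exp ((Complex.arg (w / z)) * I) = w / z := by
  have hz' : ‖z‖ = 1 := by simpa using hz
  have hz0 : z ≠ 0 := by intro h; rw [h] at hz'; simp at hz'
  have habs : ‖w / z‖ = 1 := by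
    rw [norm_div, hz', hw]; norm_num
  have := Complex.norm_mul_exp_arg_mul_I (w / z)
  rw [habs] at this
  simpa using this


lemma lift_grid (f : ℝ → ℂ) (hf : Continuous f) (h1 : ∀ x, ‖f x‖ = 1) (a δ : ℝ) (hδ : 0 < δ) :
    ∀ n : ℕ, (∀ x ∈ Icc a (a + n*δ), ∀ y ∈ Icc a (a + n*δ), |x - y| ≤ δ → ‖f x - f y‖ < 1) →
    ∃ α : ℝ → ℝ, ContinuousOn α (Icc a (a + n*δ)) ∧ ∀ x ∈ Icc a (a + n*δ), Complex.exp (α x * I) = f x := by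
  intro n
  induction n with
  | zero =>
    intro _
    refine ⟨fun _ => Complex.arg (f a), continuousOn_const, ?_⟩
    intro x hx
    simp only [Nat.cast_zero, zero_mul, add_zero] at hx
    have hxa : x = a := le_antisymm hx.2 hx.1
    subst hxa
    show Complex.exp (↑(Complex.arg (f x)) * I) = f x
    have h2 := Complex.norm_mul_exp_arg_mul_I (f x)
    rw [show ‖f x‖ = 1 from h1 x] at h2
    simpa using h2
  | succ n ih =>
    intro hosc
    have hsub : Icc a (a + n*δ) ⊆ Icc a (a + (n+1 : ℕ)*δ) := by
      apply Icc_subset_Icc le_rfl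
      push_cast; nlinarith
    obtain ⟨α, hαc, hαl⟩ := ih (fun x hx y hy => hosc x (hsub hx) y (hsub hy))
    set c := a + n*δ with hc
    have hca : a ≤ c := by nlinarith
    have hcc : c ≤ a + (n+1:ℕ)*δ := by push_cast; nlinarith
    have hfc0 : f c ≠ 0 := by intro h; have := h1 c; rw [h] at this; simp at this
    refine ⟨fun x => α (min x c) + Complex.arg (f (max x c) / f c), ?_, ?_⟩
    · apply ContinuousOn.add
      · apply hαc.comp (Continuous.continuousOn (by fun_prop))
        intro x hx
        exact ⟨le_min hx.1 hca, min_le_right _ _⟩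
      · intro x hx
        apply ContinuousAt.continuousWithinAt
        have hg : Continuous (fun x => f (max x c) / f c) := by fun_prop
        apply (Complex.continuousAt_arg ?_).comp hg.continuousAt
        apply unit_mem_slitPlane (h1 c)
        apply hosc _ ⟨le_trans hca (le_max_right _ _), max_le (hx.2) hcc⟩ c ⟨hca, hcc⟩
        rw [abs_sub_comm, abs_of_nonpos (by simp), neg_sub]
        have : max x c ≤ c + δ := by
          apply max_le _ (by linarith)
          calc x ≤ a + (n+1:ℕ)*δ := hx.2
          _ = c + δ := by rw [hc]; push_cast; ring
        linarith
    · intro x hx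
      show Complex.exp (↑(α (min x c) + Complex.arg (f (max x c) / f c)) * I) = f x
      rcases le_total x c with hxc | hxc
      · rw [min_eq_left hxc, max_eq_right hxc, div_self hfc0, Complex.arg_one]
        push_cast [add_zero]
        exact hαl x ⟨hx.1, hxc⟩
      · rw [min_eq_right hxc, max_eq_left hxc]
        have hfx0 : ‖f x - f c‖ < 1 := by
          apply hosc x hx c ⟨hca, hcc⟩
          rw [_root_.abs_of_nonneg (by linarith)]
          calc x - c ≤ a + (n+1:ℕ)*δ - c := by linarith [hx.2]
          _ = δ := by rw [hc]; push_cast; ring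
        have harg := exp_arg_unit (z := f c) (w := f x) (by simpa using h1 c) (h1 x)
        push_cast [add_mul]
        rw [Complex.exp_add, hαl c ⟨hca, le_rfl⟩, harg]
        field_simp

lemma real_of_exp_eq {p q : ℝ} (h : Complex.exp ((p:ℂ) * I) = Complex.exp ((q:ℂ) * I)) :
    ∃ k : ℤ, p - q = k * (2 * Real.pi) := by
  obtain ⟨n, hn⟩ := Complex.exp_eq_exp_iff_exists_int.1 h
  refine ⟨n, ?_⟩
  have him := congrArg Complex.im hn
  simp only [Complex.add_im, Complex.mul_im, Complex.ofReal_re, Complex.ofReal_im,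
    Complex.I_re, Complex.I_im, Complex.intCast_re, Complex.intCast_im, Complex.mul_re,
    Complex.re_ofNat, Complex.im_ofNat, mul_zero, mul_one, zero_mul, add_zero, zero_add,
    sub_zero, zero_sub, neg_zero] at him
  linarith

/-- uniqueness of continuous lifts on an interval, given agreement at one point. -/
lemma lift_unique {f : ℝ → ℂ} {α β : ℝ → ℝ} {s : Set ℝ} (hs : s.OrdConnected)
    (hαc : ContinuousOn α s) (hβc : ContinuousOn β s)
    (hα : ∀ x ∈ s, Complex.exp (α x * I) = f x) (hβ : ∀ x ∈ s, Complex.exp (β x * I) = f x)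
    {z : ℝ} (hz : z ∈ s) (hzz : α z = β z) {x : ℝ} (hx : x ∈ s) : α x = β x := by
  have key : ∀ y ∈ s, ∃ k : ℤ, α y - β y = k * (2 * Real.pi) := by
    intro y hy
    exact real_of_exp_eq (by rw [hα y hy, hβ y hy])
  have := int_valued_const hs (hαc.sub hβc) key hx hz
  have h0 : α z - β z = 0 := by rw [hzz]; ring
  linarith [show α x - β x = α z - β z from this, h0]

/-- Existence of a continuous lift on `Icc (-(N+1)) (N+1)`, normalized at `0`. -/
lemma lift_on_Icc (f : ℝ → ℂ) (hf : Continuous f) (h1 : ∀ x, ‖f x‖ = 1) (N : ℕ) :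
    ∃ α : ℝ → ℝ, ContinuousOn α (Icc (-(N+1) : ℝ) (N+1)) ∧ α 0 = Complex.arg (f 0) ∧
      ∀ x ∈ Icc (-(N+1) : ℝ) (N+1), Complex.exp (α x * I) = f x := by
  have hcomp : IsCompact (Icc (-(N+1) : ℝ) (N+2)) := isCompact_Icc
  have huc := hcomp.uniformContinuousOn_of_continuous hf.continuousOn
  rw [Metric.uniformContinuousOn_iff] at huc
  obtain ⟨δ₀, hδ₀, hucd⟩ := huc 1 one_pos
  set δ := min (δ₀/2) 1 with hδdef
  have hδ : 0 < δ := lt_min (by linarith) one_pos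
  set q := (2*(N+1))/δ with hq
  set n := ⌊q⌋₊ + 1 with hn
  have hq0 : 0 ≤ q := by positivity
  have hnδ : 2*(N+1) ≤ n * δ := by
    have : q < (n:ℝ) := by rw [hn]; push_cast; exact Nat.lt_floor_add_one q
    calc 2*(N+1) = q * δ := by rw [hq]; field_simp
    _ ≤ n * δ := by nlinarith
  have hnδ2 : (n:ℝ) * δ ≤ 2*(N+1) + 1 := by
    have h1' : (⌊q⌋₊ : ℝ) ≤ q := Nat.floor_le hq0
    have : (n:ℝ) = ⌊q⌋₊ + 1 := by rw [hn]; push_cast; ring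
    have hδ1 : δ ≤ 1 := min_le_right _ _
    have : (n:ℝ) * δ = (⌊q⌋₊:ℝ) * δ + δ := by rw [this]; ring
    rw [this]
    have : (⌊q⌋₊:ℝ) * δ ≤ q * δ := by nlinarith
    have hqδ : q * δ = 2*(N+1) := by rw [hq]; field_simp
    nlinarith
  set a := (-(N+1) : ℝ) with ha
  have hcast : ((n:ℝ)) = (⌊q⌋₊:ℝ) + 1 := by rw [hn]; push_cast; ring
  have hsub1 : Icc (-(N+1):ℝ) (N+1) ⊆ Icc a (a + n*δ) := by
    apply Icc_subset_Icc le_rfl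
    rw [ha]; linarith [hcast, hnδ]
  have hsub2 : Icc a (a + n*δ) ⊆ Icc (-(N+1):ℝ) (N+2) := by
    apply Icc_subset_Icc le_rfl
    rw [ha]
    have h' : (n:ℝ) * δ ≤ 2*(↑N+1)+1 := hnδ2
    rw [hcast] at h'
    push_cast
    linarith [h']
  obtain ⟨α, hαc, hαl⟩ := lift_grid f hf h1 a δ hδ n (by
    intro x hx y hy hxy
    have := hucd x (hsub2 hx) y (hsub2 hy) (by rw [Real.dist_eq]; calc |x-y| ≤ δ := hxy
                                              _ ≤ δ₀/2 := min_le_left _ _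
                                              _ < δ₀ := by linarith)
    rwa [dist_eq_norm] at this)
  have h0mem : (0:ℝ) ∈ Icc a (a + n*δ) := hsub1 ⟨by push_cast; linarith, by push_cast; linarith⟩
  -- renormalize
  have hexp0 : Complex.exp (α 0 * I) = f 0 := hαl 0 h0mem
  have hexp0' : Complex.exp ((Complex.arg (f 0) : ℝ) * I) = f 0 := by
    have h2 := Complex.norm_mul_exp_arg_mul_I (f 0)
    rw [show ‖f 0‖ = 1 from h1 0] at h2
    simpa using h2
  obtain ⟨k, hk⟩ : ∃ k : ℤ, α 0 - Complex.arg (f 0) = k * (2*Real.pi) :=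
    real_of_exp_eq (by rw [hexp0, hexp0'])
  refine ⟨fun x => α x - k * (2*Real.pi), ?_, by simp; linarith [hk], ?_⟩
  · exact (hαc.mono hsub1).sub continuousOn_const
  · intro x hx
    push_cast [sub_mul]
    rw [Complex.exp_sub, hαl x (hsub1 hx)]
    have : Complex.exp ((k:ℂ) * (2*Real.pi) * I) = 1 := by
      rw [show (k:ℂ) * (2*Real.pi) * I = k * (2*Real.pi*I) by ring]
      exact Complex.exp_int_mul_two_pi_mul_I k
    rw [this, div_one]


/-- global continuous lift of a unit-norm continuous function on ℝ. -/
lemma exists_lift (f : ℝ → ℂ) (hf : Continuous f) (h1 : ∀ x, ‖f x‖ = 1) :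
    ∃ α : ℝ → ℝ, Continuous α ∧ ∀ x, Complex.exp (α x * I) = f x := by
  choose L hLc hL0 hLl using lift_on_Icc f hf h1
  have hmem : ∀ (x : ℝ) (N : ℕ), |x| ≤ N + 1 → x ∈ Icc (-(N+1):ℝ) (N+1) := by
    intro x N h
    rw [abs_le] at h
    exact ⟨h.1, h.2⟩
  have hself : ∀ x : ℝ, |x| ≤ (⌊|x|⌋₊ : ℝ) + 1 := by
    intro x
    have := Nat.lt_floor_add_one |x|
    linarith
  -- agreement of lifts
  have hagree : ∀ (M N : ℕ), M ≤ N → ∀ x ∈ Icc (-(M+1):ℝ) (M+1), L M x = L N x := by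
    intro M N hMN x hx
    have hMN' : (M:ℝ) ≤ N := by exact_mod_cast hMN
    have hsub : Icc (-(M+1):ℝ) (M+1) ⊆ Icc (-(N+1):ℝ) (N+1) :=
      Icc_subset_Icc (by linarith) (by linarith)
    have h0m : (0:ℝ) ∈ Icc (-(M+1):ℝ) (M+1) := ⟨by push_cast; linarith, by push_cast; linarith⟩
    exact lift_unique (Set.ordConnected_Icc) (hLc M) ((hLc N).mono hsub)
      (hLl M) (fun y hy => hLl N y (hsub hy)) h0m (by rw [hL0 M, hL0 N]) hx
  refine ⟨fun x => L ⌊|x|⌋₊ x, ?_, ?_⟩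
  · rw [continuous_iff_continuousAt]
    intro x₀
    set N₀ := ⌊|x₀|⌋₊ + 1 with hN₀
    have hx₀mem : x₀ ∈ Icc (-(N₀+1):ℝ) (N₀+1) := by
      apply hmem
      have := hself x₀
      rw [hN₀]; push_cast
      linarith
    have hlt : |x₀| < (N₀ : ℝ) := by
      rw [hN₀]; push_cast; exact Nat.lt_floor_add_one |x₀|
    have hopen : IsOpen {x : ℝ | |x| < (N₀:ℝ)} := isOpen_lt continuous_abs continuous_const
    have hev : ∀ᶠ x in nhds x₀, L ⌊|x|⌋₊ x = L N₀ x := by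
      refine Filter.eventually_of_mem (hopen.mem_nhds hlt) (fun x hx => ?_)
      have hxlt : |x| < (N₀:ℝ) := hx
      have hfl : ⌊|x|⌋₊ ≤ N₀ := by
        have h2 : ⌊|x|⌋₊ < N₀ := by
          rw [Nat.floor_lt (abs_nonneg x)]
          exact_mod_cast hxlt
        omega
      exact hagree ⌊|x|⌋₊ N₀ hfl x (hmem x _ (hself x))
    have hcont : ContinuousAt (L N₀) x₀ := by
      apply (hLc N₀).continuousAt
      apply Icc_mem_nhds
      · have h3 : -|x₀| ≤ x₀ := neg_abs_le x₀
        linarith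
      · have h3 : x₀ ≤ |x₀| := le_abs_self x₀
        linarith
    exact hcont.congr (Filter.EventuallyEq.symm hev)
  · intro x
    exact hLl ⌊|x|⌋₊ x (hmem x _ (hself x))


lemma eq_zero_of_nonneg_of_integral_zero {g : ℝ → ℝ} (hg : Continuous g) {a b : ℝ} (hab : a < b)
    (hnn : ∀ x ∈ Icc a b, 0 ≤ g x) (hi : (∫ x in a..b, g x) = 0) : ∀ x ∈ Icc a b, g x = 0 := by
  by_contra hcon
  push_neg at hcon
  obtain ⟨x₀, hx₀, hgx₀⟩ := hcon
  have hpos : 0 < g x₀ := lt_of_le_of_ne (hnn x₀ hx₀) (Ne.symm hgx₀)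
  obtain ⟨δ, hδ, hball⟩ := Metric.continuousAt_iff.1 hg.continuousAt (g x₀ / 2) (by linarith)
  set c := max a (x₀ - δ/2) with hc
  set d := min b (x₀ + δ/2) with hd
  have hac : a ≤ c := le_max_left _ _
  have hdb : d ≤ b := min_le_left _ _
  have hcx : c ≤ x₀ := max_le hx₀.1 (by linarith)
  have hxd : x₀ ≤ d := le_min hx₀.2 (by linarith)
  have hcd : c < d := by
    rcases eq_or_lt_of_le (hcx.trans hxd) with heq | hlt
    · exfalso
      have hcx0 : c = x₀ := le_antisymm hcx (by rw [heq]; exact hxd)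
      have hdx0 : d = x₀ := by rw [← hcx0, heq]
      have h1 : a = x₀ := by
        rcases max_cases a (x₀ - δ/2) with ⟨h, _⟩ | ⟨h, hh⟩
        · rw [← hc, hcx0] at h; exact h.symm ▸ rfl
        · rw [← hc] at h; rw [hcx0] at h; linarith
      have h2 : b = x₀ := by
        rcases min_cases b (x₀ + δ/2) with ⟨h, _⟩ | ⟨h, hh⟩
        · rw [← hd, hdx0] at h; exact h.symm ▸ rfl
        · rw [← hd] at h; rw [hdx0] at h; linarith
      rw [h1, h2] at hab; exact lt_irrefl _ hab
    · exact hlt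
  have hlow : ∀ y ∈ Icc c d, g x₀ / 2 ≤ g y := by
    intro y hy
    have hdist : dist y x₀ < δ := by
      rw [Real.dist_eq, abs_lt]
      constructor
      · have : x₀ - δ/2 ≤ c := le_max_right _ _
        have := hy.1
        linarith
      · have : d ≤ x₀ + δ/2 := min_le_right _ _
        have := hy.2
        linarith
    have := hball hdist
    rw [Real.dist_eq, abs_lt] at this
    linarith [this.1]
  have hints : ∀ (u v : ℝ), IntervalIntegrable g MeasureTheory.volume u v :=
    fun u v => hg.intervalIntegrable u v
  have hsplit : (∫ x in a..b, g x) = (∫ x in a..c, g x) + (∫ x in c..d, g x) + (∫ x in d..b, g x) := by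
    rw [integral_add_adjacent_intervals (hints a c) (hints c d),
        integral_add_adjacent_intervals (hints a c |>.trans (hints c d)) (hints d b)]
  have h1 : 0 ≤ ∫ x in a..c, g x :=
    integral_nonneg hac (fun u hu => hnn u ⟨hu.1, hu.2.trans (hcx.trans (hxd.trans hdb))⟩)
  have h2 : 0 ≤ ∫ x in d..b, g x :=
    integral_nonneg hdb (fun u hu => hnn u ⟨(hac.trans (hcx.trans hxd)).trans hu.1, hu.2⟩)
  have h3 : g x₀ / 2 * (d - c) ≤ ∫ x in c..d, g x := by
    have := integral_mono_on hcd.le (intervalIntegrable_const) (hints c d) hlow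
    rw [integral_const] at this
    simpa [smul_eq_mul, mul_comm] using this
  have : 0 < g x₀ / 2 * (d - c) := by
    apply mul_pos (by linarith) (by linarith)
  linarith [hi ▸ hsplit]

lemma exists_le_of_integral_le {g : ℝ → ℝ} (hg : Continuous g) {a b c : ℝ} (hab : a < b)
    (hi : (∫ x in a..b, g x) ≤ c * (b - a)) : ∃ u ∈ Icc a b, g u ≤ c := by
  by_contra hcon
  push_neg at hcon
  have hnn : ∀ x ∈ Icc a b, 0 ≤ g x - c := fun x hx => by linarith [hcon x hx]
  have hint : (∫ x in a..b, (g x - c)) = (∫ x in a..b, g x) - c * (b - a) := by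
    rw [integral_sub (hg.intervalIntegrable a b) (intervalIntegrable_const)]
    rw [integral_const]
    simp [smul_eq_mul, mul_comm]
  have h0 : 0 ≤ ∫ x in a..b, (g x - c) := integral_nonneg hab.le hnn
  have heq : (∫ x in a..b, (g x - c)) = 0 := le_antisymm (by linarith) h0
  have := eq_zero_of_nonneg_of_integral_zero (by fun_prop) hab hnn heq a ⟨le_rfl, hab.le⟩
  have := hcon a ⟨le_rfl, hab.le⟩
  linarith

lemma exists_ge_of_integral_ge {g : ℝ → ℝ} (hg : Continuous g) {a b c : ℝ} (hab : a < b)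
    (hi : c * (b - a) ≤ ∫ x in a..b, g x) : ∃ u ∈ Icc a b, c ≤ g u := by
  obtain ⟨u, hu, hle⟩ := exists_le_of_integral_le (g := fun x => -g x) (by fun_prop) hab
    (c := -c) (by rw [intervalIntegral.integral_neg]; linarith)
  exact ⟨u, hu, by linarith⟩


lemma exp_diff (p q : ℝ) : Complex.exp (p*I) - Complex.exp (q*I)
    = 2 * (Real.sin ((p-q)/2) : ℂ) * I * Complex.exp ((((p+q)/2 : ℝ) : ℂ) * I) := by
  rw [Complex.exp_mul_I, Complex.exp_mul_I, Complex.exp_mul_I, Complex.ofReal_sin]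
  push_cast
  linear_combination Complex.cos_sub_cos p q + Complex.sin_sub_sin p q * Complex.I -
    2 * Complex.sin ((p-q)/2) * Complex.sin ((p+q)/2) * Complex.I_sq

lemma eq_of_re_conj_mul {z w : ℂ} (hz : ‖z‖ = 1) (hw : ‖w‖ = 1)
    (h : ((starRingEnd ℂ) w * z).re = 1) : z = w := by
  have h1 : Complex.normSq (z - w) = Complex.normSq z + Complex.normSq w - 2 * (z * (starRingEnd ℂ) w).re := by
    exact Complex.normSq_sub z w
  have hz2 : Complex.normSq z = 1 := by
    rw [Complex.normSq_eq_norm_sq, hz]; norm_num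
  have hw2 : Complex.normSq w = 1 := by
    rw [Complex.normSq_eq_norm_sq, hw]; norm_num
  have hcomm : (z * (starRingEnd ℂ) w).re = ((starRingEnd ℂ) w * z).re := by rw [mul_comm]
  have : Complex.normSq (z - w) = 0 := by rw [h1, hz2, hw2, hcomm, h]; ring
  have := Complex.normSq_eq_zero.1 this
  exact sub_eq_zero.1 this


lemma const_of_unit_avg {g : ℝ → ℂ} (hg : Continuous g) (h1 : ∀ x, ‖g x‖ = 1) {L : ℝ}
    (hL : 0 < L) {c : ℂ} (hc : ‖c‖ = 1)
    (hi : (∫ x in (0:ℝ)..L, g x) = (L : ℂ) * c) : ∀ x ∈ Set.Icc 0 L, g x = c := by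
  set f : ℝ → ℝ := fun x => 1 - ((starRingEnd ℂ) c * g x).re with hf
  have hfc : Continuous f := by
    apply continuous_const.sub
    exact Complex.continuous_re.comp (continuous_const.mul hg)
  have hnn : ∀ x ∈ Set.Icc (0:ℝ) L, 0 ≤ f x := by
    intro x _
    have h2 : ((starRingEnd ℂ) c * g x).re ≤ ‖(starRingEnd ℂ) c * g x‖ := Complex.re_le_norm _
    have h3 : ‖(starRingEnd ℂ) c * g x‖ = 1 := by
      rw [norm_mul, RCLike.norm_conj, hc, h1 x, mul_one]
    simp only [hf]
    linarith [h2.trans h3.le]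
  have hint : (∫ x in (0:ℝ)..L, f x) = 0 := by
    have e1 : (∫ x in (0:ℝ)..L, ((starRingEnd ℂ) c * g x)) = (starRingEnd ℂ) c * ∫ x in (0:ℝ)..L, g x :=
      intervalIntegral.integral_const_mul _ _
    have e2 : (∫ x in (0:ℝ)..L, ((starRingEnd ℂ) c * g x).re)
        = ((starRingEnd ℂ) c * ∫ x in (0:ℝ)..L, g x).re := by
      rw [← e1]
      exact Complex.reCLM.intervalIntegral_comp_comm ((continuous_const.mul hg).intervalIntegrable 0 L)
    have e3 : ((starRingEnd ℂ) c * ∫ x in (0:ℝ)..L, g x).re = L := by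
      rw [hi, show (starRingEnd ℂ) c * ((L:ℂ) * c) = (L:ℂ) * ((starRingEnd ℂ) c * c) by ring]
      rw [Complex.conj_mul']
      norm_cast
      rw [hc]
      norm_num
    have e4 : (∫ x in (0:ℝ)..L, f x) = L - ∫ x in (0:ℝ)..L, ((starRingEnd ℂ) c * g x).re := by
      simp only [hf]
      have hgi : IntervalIntegrable (fun x => ((starRingEnd ℂ) c * g x).re) MeasureTheory.volume 0 L :=
        Continuous.intervalIntegrable (by fun_prop) 0 L
      rw [intervalIntegral.integral_sub (intervalIntegrable_const) hgi]
      rw [intervalIntegral.integral_const]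
      simp
    rw [e4, e2, e3]
    ring
  intro x hx
  have := eq_zero_of_nonneg_of_integral_zero hfc hL hnn hint x hx
  simp only [hf] at this
  exact eq_of_re_conj_mul (h1 x) hc (by linarith)


lemma coeff_identity (p q m : ℝ) :
    (Real.sin ((p - q)/2) : ℂ) * Complex.exp ((((p+q)/2 - m : ℝ) : ℂ) * I)
    = (Complex.exp (-(m:ℂ) * I) * (-I/2)) * (Complex.exp ((p:ℂ)*I) - Complex.exp ((q:ℂ)*I)) := by
  rw [exp_diff p q]
  have h1 : (((p+q)/2 - m : ℝ) : ℂ) * I = (((p+q)/2 : ℝ) : ℂ) * I + (-(m:ℂ)) * I := by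
    push_cast; ring
  rw [h1, Complex.exp_add]
  linear_combination ((Real.sin ((p - q)/2) : ℂ) *
    Complex.exp ((((p+q)/2 : ℝ) : ℂ) * I) * Complex.exp (-(m:ℂ)*I)) * Complex.I_sq

lemma core (E₀ : ℝ) (hE₀ : 0 < E₀) (α β : ℝ → ℝ) (hαc : Continuous α) (hβc : Continuous β)
    (hb : ∀ t u : ℝ, 0 ≤ α u - β (u - 2*t) ∧ α u - β (u - 2*t) ≤ 2*Real.pi)
    (hstar : ∀ t : ℝ,
      (∫ u in (0:ℝ)..E₀, (Complex.exp (α u * I) - Complex.exp (β (u - 2*t) * I))) = 0)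
    (hβnc : ∃ v, β v ≠ β 0) : False := by
  have hπ := Real.pi_pos
  have hαβ : ∀ u v : ℝ, β v ≤ α u ∧ α u ≤ β v + 2*Real.pi := by
    intro u v
    have := hb ((u - v)/2) u
    rw [show u - 2*((u - v)/2) = v by ring] at this
    constructor <;> linarith [this.1, this.2]
  have hbddA : BddAbove (range α) := ⟨β 0 + 2*Real.pi, by rintro _ ⟨u, rfl⟩; exact (hαβ u 0).2⟩
  have hbddA' : BddBelow (range α) := ⟨β 0, by rintro _ ⟨u, rfl⟩; exact (hαβ u 0).1⟩
  have hbddB : BddAbove (range β) := ⟨α 0, by rintro _ ⟨v, rfl⟩; exact (hαβ 0 v).1⟩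
  have hbddB' : BddBelow (range β) :=
    ⟨α 0 - 2*Real.pi, by rintro _ ⟨v, rfl⟩; linarith [(hαβ 0 v).2]⟩
  set Ap := sSup (range α) with hAp
  set Am := sInf (range α) with hAm
  set Bp := sSup (range β) with hBp
  set Bm := sInf (range β) with hBm
  have hA1 : ∀ u, α u ≤ Ap := fun u => le_csSup hbddA (mem_range_self u)
  have hA2 : ∀ u, Am ≤ α u := fun u => csInf_le hbddA' (mem_range_self u)
  have hB1 : ∀ v, β v ≤ Bp := fun v => le_csSup hbddB (mem_range_self v)
  have hB2 : ∀ v, Bm ≤ β v := fun v => csInf_le hbddB' (mem_range_self v)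
  have hABm : ∀ u, α u ≤ Bm + 2*Real.pi := by
    intro u
    have : α u - 2*Real.pi ≤ Bm := le_csInf (range_nonempty β)
      (by rintro _ ⟨v, rfl⟩; linarith [(hαβ u v).2])
    linarith
  have hAB1 : Ap ≤ Bm + 2*Real.pi :=
    csSup_le (range_nonempty α) (by rintro _ ⟨u, rfl⟩; exact hABm u)
  have hBAm : ∀ v, β v ≤ Am := fun v =>
    le_csInf (range_nonempty α) (by rintro _ ⟨u, rfl⟩; exact (hαβ u v).1)
  have hAB2 : Bp ≤ Am := csSup_le (range_nonempty β) (by rintro _ ⟨v, rfl⟩; exact hBAm v)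
  set mid := (Am + Bm + Ap + Bp)/4 with hmid
  have hwin : ∀ t u : ℝ, |(α u + β (u - 2*t))/2 - mid| ≤ Real.pi/2 := by
    intro t u
    have h1 := hA1 u; have h2 := hA2 u
    have h3 := hB1 (u - 2*t); have h4 := hB2 (u - 2*t)
    rw [abs_le]
    constructor
    · nlinarith [hAB1, hAB2]
    · nlinarith [hAB1, hAB2]
  have hF : ∀ t : ℝ, ∀ w ∈ Icc (0:ℝ) E₀,
      Real.sin ((α w - β (w - 2*t))/2) * Real.cos ((α w + β (w - 2*t))/2 - mid) = 0 := by
    intro t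
    have hGint : (∫ u in (0:ℝ)..E₀, ((Real.sin ((α u - β (u - 2*t))/2) : ℂ) *
        Complex.exp ((((α u + β (u - 2*t))/2 - mid : ℝ) : ℂ) * I))) = 0 := by
      have hcong : ∀ u ∈ uIcc (0:ℝ) E₀, (( Real.sin ((α u - β (u - 2*t))/2) : ℂ) *
          Complex.exp ((((α u + β (u - 2*t))/2 - mid : ℝ) : ℂ) * I))
          = (Complex.exp (-(mid:ℂ) * I) * (-I/2)) *
            (Complex.exp ((α u : ℂ)*I) - Complex.exp ((β (u - 2*t) : ℂ)*I)) :=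
        fun u _ => coeff_identity (α u) (β (u - 2*t)) mid
      rw [intervalIntegral.integral_congr hcong, intervalIntegral.integral_const_mul, hstar t,
        mul_zero]
    -- take real parts
    have hre : (∫ u in (0:ℝ)..E₀,
        (Real.sin ((α u - β (u - 2*t))/2) * Real.cos ((α u + β (u - 2*t))/2 - mid))) = 0 := by
      have hGc : Continuous (fun u => ((Real.sin ((α u - β (u - 2*t))/2) : ℂ) *
          Complex.exp ((((α u + β (u - 2*t))/2 - mid : ℝ) : ℂ) * I))) := by fun_prop
      have hGi : IntervalIntegrable (fun u => ((Real.sin ((α u - β (u - 2*t))/2) : ℂ) *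
          Complex.exp ((((α u + β (u - 2*t))/2 - mid : ℝ) : ℂ) * I))) MeasureTheory.volume 0 E₀ :=
        hGc.intervalIntegrable 0 E₀
      have := Complex.reCLM.intervalIntegral_comp_comm hGi
      rw [hGint] at this
      simp only [Complex.reCLM_apply, Complex.zero_re] at this
      refine Eq.trans ?_ this
      apply intervalIntegral.integral_congr
      intro u _
      simp only [Complex.reCLM_apply, Complex.mul_re, Complex.ofReal_re, Complex.ofReal_im,
        zero_mul, sub_zero, Complex.exp_ofReal_mul_I_re, Complex.exp_ofReal_mul_I_im]
    have hnn : ∀ w ∈ Icc (0:ℝ) E₀,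
        0 ≤ Real.sin ((α w - β (w - 2*t))/2) * Real.cos ((α w + β (w - 2*t))/2 - mid) := by
      intro w _
      apply mul_nonneg
      · apply Real.sin_nonneg_of_nonneg_of_le_pi
        · linarith [(hb t w).1]
        · linarith [(hb t w).2]
      · apply Real.cos_nonneg_of_mem_Icc
        have := hwin t w
        rw [abs_le] at this
        exact ⟨this.1, this.2⟩
    exact eq_zero_of_nonneg_of_integral_zero (by fun_prop) hE₀ hnn hre
  -- evaluate at w = 0, t = -v/2
  have hkey : ∀ v : ℝ, Real.sin ((α 0 - β v)/2) * Real.cos ((α 0 + β v)/2 - mid) = 0 := by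
    intro v
    have := hF (-v/2) 0 ⟨le_rfl, hE₀.le⟩
    rw [show (0:ℝ) - 2*(-v/2) = v by ring] at this
    exact this
  -- finite value set for β
  have hclaim : ∀ v : ℝ, β v = α 0 ∨ β v = α 0 - 2*Real.pi ∨
      β v = 2*(mid + Real.pi/2) - α 0 ∨ β v = 2*(mid - Real.pi/2) - α 0 := by
    intro v
    rcases mul_eq_zero.1 (hkey v) with hs | hc
    · obtain ⟨n, hn⟩ := Real.sin_eq_zero_iff.1 hs
      have hx1 : 0 ≤ (α 0 - β v)/2 := by linarith [(hαβ 0 v).1]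
      have hx2 : (α 0 - β v)/2 ≤ Real.pi := by linarith [(hαβ 0 v).2]
      have hn0 : (0:ℤ) ≤ n := by
        by_contra hcon
        push_neg at hcon
        have : (n:ℝ) ≤ -1 := by
          have h' : n ≤ -1 := by omega
          exact_mod_cast h'
        nlinarith
      have hn1 : n ≤ 1 := by
        by_contra hcon
        push_neg at hcon
        have : (2:ℝ) ≤ (n:ℝ) := by
          have h' : (2:ℤ) ≤ n := by omega
          exact_mod_cast h'
        nlinarith
      interval_cases n
      · left; simp at hn; linarith
      · right; left; simp at hn; linarith
    · obtain ⟨k, hk⟩ := Real.cos_eq_zero_iff.1 hc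
      have hw := hwin (-v/2) 0
      rw [show (0:ℝ) - 2*(-v/2) = v by ring] at hw
      rw [hk, abs_le] at hw
      have hk0 : k = 0 ∨ k = -1 := by
        rcases hw with ⟨hw1, hw2⟩
        have h1 : -1 ≤ 2*(k:ℝ) + 1 := by nlinarith
        have h2 : 2*(k:ℝ) + 1 ≤ 1 := by nlinarith
        have h1' : (-1:ℤ) ≤ 2*k + 1 := by exact_mod_cast h1
        have h2' : (2:ℤ)*k + 1 ≤ 1 := by exact_mod_cast h2
        omega
      rcases hk0 with rfl | rfl
      · right; right; left
        simp at hk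
        linarith
      · right; right; right
        push_cast at hk
        linarith
  -- β is nonconstant but takes only finitely many values
  obtain ⟨v₁, hv₁⟩ := hβnc
  set S : Set ℝ := {α 0, α 0 - 2*Real.pi, 2*(mid + Real.pi/2) - α 0, 2*(mid - Real.pi/2) - α 0}
    with hS
  have hSfin : S.Finite := by
    apply Set.Finite.insert
    apply Set.Finite.insert
    apply Set.Finite.insert
    exact Set.finite_singleton _
  have hlt : min (β 0) (β v₁) < max (β 0) (β v₁) := by
    rcases lt_or_gt_of_ne hv₁ with h | h
    · rw [min_eq_right h.le, max_eq_left h.le]; exact h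
    · rw [min_eq_left h.le, max_eq_right h.le]; exact h
  obtain ⟨y, hy⟩ := ((Set.infinite_coe_iff.1 (Set.Ioo.infinite hlt)).diff hSfin).nonempty
  have hymem : y ∈ uIcc (β v₁) (β 0) := by
    rw [Set.uIcc_comm, Set.mem_uIcc]
    rcases le_total (β 0) (β v₁) with h | h
    · left
      simp only [min_eq_left h, max_eq_right h] at hy
      exact ⟨(hy.1 : y ∈ Ioo _ _).1.le, (hy.1 : y ∈ Ioo _ _).2.le⟩
    · right
      simp only [min_eq_right h, max_eq_left h] at hy
      exact ⟨(hy.1 : y ∈ Ioo _ _).1.le, (hy.1 : y ∈ Ioo _ _).2.le⟩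
  obtain ⟨v, _, hv⟩ := intermediate_value_uIcc (hβc.continuousOn) hymem
  have : y ∈ S := by
    rw [hS]
    rcases hclaim v with h | h | h | h <;> rw [← hv, h] <;> simp
  exact hy.2 this


lemma lift_iterate {α : ℝ → ℝ} {E₀ d : ℝ} (h : ∀ u, α (u + E₀) = α u + d) :
    ∀ (n : ℤ) (u : ℝ), α (u + n*E₀) = α u + n*d := by
  intro n
  induction n using Int.induction_on with
  | zero => intro u; simp
  | succ k ih =>
    intro u
    have h1 : u + ((k:ℤ)+1 : ℤ)*E₀ = (u + (k:ℝ)*E₀) + E₀ := by push_cast; ring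
    rw [h1, h (u + (k:ℝ)*E₀)]
    have := ih u
    push_cast at this ⊢
    linarith
  | pred k ih =>
    intro u
    have h1 : u + (-(k:ℤ)-1 : ℤ)*E₀ + E₀ = u + (-(k:ℤ) : ℤ)*E₀ := by push_cast; ring
    have h2 := h (u + (-(k:ℤ)-1 : ℤ)*E₀)
    rw [h1] at h2
    have := ih u
    push_cast at this h2 ⊢
    linarith

theorem master (E₀ : ℝ) (hE₀ : 0 < E₀) (A B : ℝ → ℂ)
    (hAc : Continuous A) (hBc : Continuous B)
    (hA1 : ∀ s, ‖A s‖ = 1) (hB1 : ∀ s, ‖B s‖ = 1)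
    (hpA : ∀ s, A (s + E₀) = A s) (hpB : ∀ s, B (s + E₀) = B s)
    (hint : (∫ s in (0:ℝ)..E₀, (A s - B s)) = 0) :
    (∃ t₀ : ℝ, ∀ x : ℝ, A (x + t₀) = B (x - t₀)) ∨
    (∃ t₁ t₂ : ℝ, t₁ < t₂ ∧ Set.Ioo t₁ t₂ ⊆ {t : ℝ | ∃ x : ℝ, A (x + t) = B (x - t)}) := by
  have hπ := Real.pi_pos
  obtain ⟨α, hαc, hαl⟩ := exists_lift A hAc hA1
  obtain ⟨β, hβc, hβl⟩ := exists_lift B hBc hB1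
  -- singularity helpers
  have hsing' : ∀ t x : ℝ, ∀ k : ℤ, α (x+t) - β (x-t) = k*(2*Real.pi) → A (x+t) = B (x-t) := by
    intro t x k hk
    rw [← hαl (x+t), ← hβl (x-t)]
    have harg : ((α (x+t) : ℝ) : ℂ) * I = ((β (x-t) : ℝ) : ℂ) * I + (k:ℂ)*(2*Real.pi*I) := by
      have h2 : α (x+t) = β (x-t) + k*(2*Real.pi) := by linarith
      rw [h2]; push_cast; ring
    rw [harg, Complex.exp_add, Complex.exp_int_mul_two_pi_mul_I, mul_one]
  have hsing : ∀ t u : ℝ, ∀ k : ℤ, α u - β (u - 2*t) = k*(2*Real.pi) →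
      ∃ x : ℝ, A (x + t) = B (x - t) := by
    intro t u k hk
    refine ⟨u - t, hsing' t (u - t) k ?_⟩
    rw [show u - t + t = u by ring, show u - t - t = u - 2*t by ring]
    exact hk
  -- period increments
  have hαk : ∀ u : ℝ, ∃ k:ℤ, (α (u+E₀) - α u) = k*(2*Real.pi) := fun u =>
    real_of_exp_eq (by rw [hαl, hαl, hpA])
  have hβk : ∀ u : ℝ, ∃ k:ℤ, (β (u+E₀) - β u) = k*(2*Real.pi) := fun u =>
    real_of_exp_eq (by rw [hβl, hβl, hpB])
  have hdα : ∀ u, α (u+E₀) = α u + (α (0+E₀) - α 0) := by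
    intro u
    have := int_valued_const Set.ordConnected_univ
      (Continuous.continuousOn (by fun_prop : Continuous (fun u => α (u+E₀) - α u)))
      (fun x _ => hαk x) (mem_univ u) (mem_univ 0)
    linarith
  have hdβ : ∀ u, β (u+E₀) = β u + (β (0+E₀) - β 0) := by
    intro u
    have := int_valued_const Set.ordConnected_univ
      (Continuous.continuousOn (by fun_prop : Continuous (fun u => β (u+E₀) - β u)))
      (fun x _ => hβk x) (mem_univ u) (mem_univ 0)
    linarith
  set da := α (0+E₀) - α 0 with hda
  set db := β (0+E₀) - β 0 with hdb
  by_cases hd : da = db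
  case neg =>
    -- different winding numbers: every t is singular
    right
    refine ⟨0, 1, by norm_num, ?_⟩
    intro t _
    set D := da - db with hD
    have hD0 : D ≠ 0 := sub_ne_zero.2 hd
    have hval : ∀ n : ℤ, α ((0:ℝ) + n*E₀) - β (((0:ℝ) + n*E₀) - 2*t)
        = (α 0 - β (0 - 2*t)) + n*D := by
      intro n
      have h1 := lift_iterate hdα n 0
      have h2 : β ((0:ℝ) + n*E₀ - 2*t) = β (0 - 2*t) + n*db := by
        have := lift_iterate hdβ n (0 - 2*t)
        rw [show (0:ℝ) - 2*t + n*E₀ = (0:ℝ) + n*E₀ - 2*t by ring] at this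
        exact this
      rw [h1, h2, hD]
      ring
    obtain ⟨n, hn⟩ := exists_int_gt (|α 0 - β (0 - 2*t)| / |D|)
    have hnpos : 0 ≤ (n:ℝ) := le_trans (by positivity) hn.le
    have hnD : |α 0 - β (0 - 2*t)| ≤ (n:ℝ) * |D| := by
      rw [div_lt_iff₀ (abs_pos.2 hD0)] at hn
      linarith
    set h0 := α 0 - β (0 - 2*t) with hh0
    -- h at n*E₀ and -n*E₀ have values h0 ± n*D; one is ≥ 0, other ≤ 0
    have hc : Continuous (fun u => α u - β (u - 2*t)) := by fun_prop
    have hmem : (0:ℝ) ∈ uIcc (α ((0:ℝ) + n*E₀) - β ((0:ℝ) + n*E₀ - 2*t))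
        (α ((0:ℝ) + (-n:ℤ)*E₀) - β ((0:ℝ) + (-n:ℤ)*E₀ - 2*t)) := by
      rw [hval n, hval (-n)]
      push_cast
      rw [Set.mem_uIcc]
      rcases le_or_gt 0 D with hDpos | hDneg
      · rcases abs_le.1 hnD with ⟨hl, hr⟩
        rw [_root_.abs_of_nonneg hDpos] at hl hr
        right; constructor <;> nlinarith
      · rcases abs_le.1 hnD with ⟨hl, hr⟩
        rw [_root_.abs_of_neg hDneg] at hl hr
        left; constructor <;> nlinarith
    obtain ⟨u, _, hu⟩ := intermediate_value_uIcc (hc.continuousOn) hmem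
    have hu' : α u - β (u - 2*t) = 0 := hu
    exact hsing t u 0 (by rw [hu']; simp)

  case pos =>
    -- equal increments d := da = db
    have hβperd : ∀ u, β (u+E₀) = β u + da := fun u => by rw [hdβ u, ← hd]
    have hβi : ∀ p q : ℝ, IntervalIntegrable β MeasureTheory.volume p q :=
      fun p q => hβc.intervalIntegrable p q
    set Ia := ∫ u in (0:ℝ)..E₀, α u with hIa
    set Ib := ∫ u in (0:ℝ)..E₀, β u with hIb
    have hGshift : ∀ c : ℝ, (∫ u in c..(c+E₀), β u) = Ib + da*c := by
      intro c
      have h2 : (∫ u in (0:ℝ)..c, β (u + E₀)) = ∫ u in E₀..(c+E₀), β u := by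
        have := integral_comp_add_right (a := (0:ℝ)) (b := c) β E₀
        simpa using this
      have h1 : (∫ u in (0:ℝ)..c, β (u + E₀)) = (∫ u in (0:ℝ)..c, β u) + da * c := by
        rw [integral_congr (g := fun u => β u + da) (fun u _ => hβperd u)]
        rw [integral_add (hβi 0 c) intervalIntegrable_const, integral_const]
        simp [smul_eq_mul, mul_comm]
      have h4 : Ib + (∫ u in E₀..(c+E₀), β u) = ∫ u in (0:ℝ)..(c+E₀), β u :=
        integral_add_adjacent_intervals (hβi 0 E₀) (hβi E₀ (c+E₀))
      have h5 : (∫ u in (0:ℝ)..c, β u) + (∫ u in c..(c+E₀), β u) = ∫ u in (0:ℝ)..(c+E₀), β u :=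
        integral_add_adjacent_intervals (hβi 0 c) (hβi c (c+E₀))
      have h6 : (∫ u in E₀..(c+E₀), β u) = (∫ u in (0:ℝ)..c, β u) + da * c := by
        rw [← h2, h1]
      linarith
    have hmean : ∀ t : ℝ, (∫ u in (0:ℝ)..E₀, (α u - β (u - 2*t))) = Ia - Ib + da*(2*t) := by
      intro t
      rw [integral_sub (hαc.intervalIntegrable 0 E₀)
        (Continuous.intervalIntegrable (by fun_prop) 0 E₀)]
      have h1 : (∫ u in (0:ℝ)..E₀, β (u - 2*t)) = ∫ u in ((0:ℝ) - 2*t)..(E₀ - 2*t), β u :=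
        integral_comp_sub_right β (2*t)
      rw [h1, show E₀ - 2*t = (0 - 2*t) + E₀ by ring, hGshift (0 - 2*t)]
      ring
    by_cases hd0 : da = 0
    case neg =>
      -- strictly monotone mean
      set ts := (Ib - Ia)/(2*da) with hts
      have hμ : (∫ u in (0:ℝ)..E₀, (α u - β (u - 2*ts))) = 0 := by
        rw [hmean]
        rw [hts]
        field_simp
        ring
      by_cases hco : ∀ u, α u - β (u - 2*ts) = 0
      · left
        refine ⟨ts, fun x => ?_⟩
        apply hsing' ts x 0
        have := hco (x + ts)
        rw [show x + ts - 2*ts = x - ts by ring] at this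
        rw [this]; simp
      · push_neg at hco
        obtain ⟨u₀, hu₀⟩ := hco
        have hperu : Function.Periodic (fun u => α u - β (u - 2*ts)) E₀ := by
          intro u
          show α (u + E₀) - β (u + E₀ - 2*ts) = α u - β (u - 2*ts)
          rw [hdα u, show u + E₀ - 2*ts = (u - 2*ts) + E₀ by ring, hβperd (u - 2*ts)]
          ring
        have hneg : ∃ w : ℝ, α w - β (w - 2*ts) < 0 := by
          by_contra hcon
          push_neg at hcon
          have hzero := eq_zero_of_nonneg_of_integral_zero
            (g := fun u => α u - β (u - 2*ts)) (by fun_prop) hE₀ (fun x _ => hcon x) hμ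
          apply hu₀
          obtain ⟨y, hy, hyeq⟩ := hperu.exists_mem_Ico₀ hE₀ u₀
          have : α u₀ - β (u₀ - 2*ts) = α y - β (y - 2*ts) := hyeq
          rw [this]
          exact hzero y ⟨hy.1, hy.2.le⟩
        obtain ⟨um, hum⟩ := hneg
        have hctm : Continuous (fun t => α um - β (um - 2*t)) := by fun_prop
        set v0 := α um - β (um - 2*ts) with hv0
        obtain ⟨δ, hδpos, hball⟩ := Metric.continuousAt_iff.1 hctm.continuousAt (-v0) (by linarith)
        have hnegnear : ∀ t' : ℝ, |t' - ts| < δ → α um - β (um - 2*t') < 0 := by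
          intro t' ht'
          have h2 := hball (by rwa [Real.dist_eq] : dist t' ts < δ)
          rw [Real.dist_eq, abs_lt] at h2
          have := h2.2
          linarith
        have hIam : Ia - Ib = -(da*(2*ts)) := by
          have e2 := hmean ts
          rw [hμ] at e2
          linarith
        have hIt : ∀ t : ℝ, (∫ u in (0:ℝ)..E₀, (α u - β (u - 2*t))) = 2*da*(t - ts) := by
          intro t
          rw [hmean t, hIam]
          ring
        have hmain : ∀ t : ℝ, |t - ts| < δ → 0 ≤ 2*da*(t - ts) → ∃ x, A (x + t) = B (x - t) := by
          intro t htδ htpos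
          obtain ⟨up, hup, hupge⟩ := exists_ge_of_integral_ge (c := 0)
            (g := fun u => α u - β (u - 2*t)) (by fun_prop) hE₀
            (by rw [hIt t]; simpa using htpos)
          have hmem : (0:ℝ) ∈ uIcc (α um - β (um - 2*t)) (α up - β (up - 2*t)) := by
            rw [Set.mem_uIcc]
            left
            exact ⟨(hnegnear t htδ).le, hupge⟩
          obtain ⟨u, _, hu⟩ := intermediate_value_uIcc
            ((by fun_prop : Continuous (fun u => α u - β (u - 2*t))).continuousOn) hmem
          have hu' : α u - β (u - 2*t) = 0 := hu
          exact hsing t u 0 (by rw [hu']; simp)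
        rcases lt_or_gt_of_ne hd0 with hdneg | hdpos
        · right
          refine ⟨ts - δ, ts, by linarith, ?_⟩
          intro t ht
          exact hmain t (by rw [abs_lt]; cases ht; constructor <;> linarith)
            (by cases ht; nlinarith)
        · right
          refine ⟨ts, ts + δ, by linarith, ?_⟩
          intro t ht
          exact hmain t (by rw [abs_lt]; cases ht; constructor <;> linarith)
            (by cases ht; nlinarith)
    case pos =>
      -- d = 0 : both lifts periodic
      have hstar : ∀ t : ℝ,
          (∫ u in (0:ℝ)..E₀, (Complex.exp (α u * I) - Complex.exp (β (u - 2*t) * I))) = 0 := by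
        intro t
        have hBper : Function.Periodic B E₀ := hpB
        have h1 : (∫ u in (0:ℝ)..E₀, B (u - 2*t)) = ∫ u in (0:ℝ)..E₀, B u := by
          rw [integral_comp_sub_right B (2*t)]
          have h2 := hBper.intervalIntegral_add_eq (0 - 2*t) 0
          rw [zero_add] at h2
          rw [show E₀ - 2*t = 0 - 2*t + E₀ by ring]
          exact h2
        have h0 : (∫ u in (0:ℝ)..E₀, (A u - B (u - 2*t))) = 0 := by
          rw [integral_sub (hAc.intervalIntegrable 0 E₀)
            (Continuous.intervalIntegrable (by fun_prop) 0 E₀), h1]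
          rw [← integral_sub (hAc.intervalIntegrable 0 E₀) (hBc.intervalIntegrable 0 E₀)]
          exact hint
        rw [← h0]
        apply integral_congr
        intro u _
        show Complex.exp (α u * I) - Complex.exp (β (u - 2*t) * I) = A u - B (u - 2*t)
        rw [hαl u, hβl (u - 2*t)]
      have hintAB : (∫ s in (0:ℝ)..E₀, A s) = ∫ s in (0:ℝ)..E₀, B s := by
        have := hint
        rw [integral_sub (hAc.intervalIntegrable 0 E₀) (hBc.intervalIntegrable 0 E₀)] at this
        exact sub_eq_zero.1 this
      by_cases hAcon : ∀ u, A u = A 0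
      · left
        have hiB : (∫ s in (0:ℝ)..E₀, B s) = (E₀:ℂ) * A 0 := by
          rw [← hintAB, integral_congr (g := fun _ => A 0) (fun s _ => hAcon s), integral_const]
          rw [sub_zero, Complex.real_smul]
        have hBA := const_of_unit_avg hBc hB1 hE₀ (hA1 0) hiB
        refine ⟨0, fun x => ?_⟩
        rw [add_zero, sub_zero, hAcon x]
        have hBper : Function.Periodic B E₀ := hpB
        obtain ⟨y, hy, hyeq⟩ := hBper.exists_mem_Ico₀ hE₀ x
        rw [hyeq]
        exact (hBA y ⟨hy.1, hy.2.le⟩).symm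
      by_cases hBcon : ∀ u, B u = B 0
      · left
        have hiA : (∫ s in (0:ℝ)..E₀, A s) = (E₀:ℂ) * B 0 := by
          rw [hintAB, integral_congr (g := fun _ => B 0) (fun s _ => hBcon s), integral_const]
          rw [sub_zero, Complex.real_smul]
        have hAB := const_of_unit_avg hAc hA1 hE₀ (hB1 0) hiA
        refine ⟨0, fun x => ?_⟩
        rw [add_zero, sub_zero, hBcon x]
        have hAper : Function.Periodic A E₀ := hpA
        obtain ⟨y, hy, hyeq⟩ := hAper.exists_mem_Ico₀ hE₀ x
        rw [hyeq]
        exact hAB y ⟨hy.1, hy.2.le⟩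
      -- both nonconstant
      by_cases hii : ∃ t₁ t₂ : ℝ, t₁ < t₂ ∧
          Set.Ioo t₁ t₂ ⊆ {t : ℝ | ∃ x : ℝ, A (x + t) = B (x - t)}
      · exact Or.inr hii
      exfalso
      have hsingset : ∀ t₁ t₂ : ℝ, t₁ < t₂ →
          (∀ t ∈ Ioo t₁ t₂, ∃ u : ℝ, ∃ k : ℤ, α u - β (u - 2*t) = k*(2*Real.pi)) → False := by
        intro t₁ t₂ h12 hall
        apply hii
        refine ⟨t₁, t₂, h12, fun t ht => ?_⟩
        obtain ⟨u, k, hk⟩ := hall t ht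
        exact hsing t u k hk
      set W := Ia - Ib with hWdef
      have hmean0 : ∀ t : ℝ, (∫ u in (0:ℝ)..E₀, (α u - β (u - 2*t))) = W := by
        intro t
        rw [hmean t, hd0]
        ring
      by_cases hWk : ∃ k : ℤ, W = (k:ℝ)*(2*Real.pi)*E₀
      · obtain ⟨k, hk⟩ := hWk
        apply hsingset 0 1 one_pos
        intro t _
        obtain ⟨u₁, hu₁, hle⟩ := exists_le_of_integral_le
          (g := fun u => α u - β (u - 2*t)) (by fun_prop) hE₀ (c := (k:ℝ)*(2*Real.pi))
          (le_of_eq (by rw [hmean0 t, hk]; ring))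
        obtain ⟨u₂, hu₂, hge⟩ := exists_ge_of_integral_ge
          (g := fun u => α u - β (u - 2*t)) (by fun_prop) hE₀ (c := (k:ℝ)*(2*Real.pi))
          (le_of_eq (by rw [hmean0 t, hk]; ring))
        have hmem : (k:ℝ)*(2*Real.pi) ∈ uIcc (α u₁ - β (u₁ - 2*t)) (α u₂ - β (u₂ - 2*t)) := by
          rw [Set.mem_uIcc]; left; exact ⟨hle, hge⟩
        obtain ⟨u, _, hu⟩ := intermediate_value_uIcc
          ((by fun_prop : Continuous (fun u => α u - β (u - 2*t))).continuousOn) hmem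
        exact ⟨u, k, hu⟩
      · push_neg at hWk
        set k0 := ⌊W/(2*Real.pi*E₀)⌋ with hk0
        have h2πE : (0:ℝ) < 2*Real.pi*E₀ := by positivity
        have hlow : (k0:ℝ)*(2*Real.pi)*E₀ < W := by
          have h1 : (k0:ℝ) ≤ W/(2*Real.pi*E₀) := Int.floor_le _
          have h2 : (k0:ℝ)*(2*Real.pi)*E₀ ≤ W := by
            rw [show (k0:ℝ)*(2*Real.pi)*E₀ = (k0:ℝ)*(2*Real.pi*E₀) by ring]
            calc (k0:ℝ)*(2*Real.pi*E₀) ≤ (W/(2*Real.pi*E₀))*(2*Real.pi*E₀) := by nlinarith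
            _ = W := by field_simp
          rcases h2.lt_or_eq with h | h
          · exact h
          · exact absurd h.symm (hWk k0)
        have hhigh : W < ((k0:ℝ)+1)*(2*Real.pi)*E₀ := by
          have h1 : W/(2*Real.pi*E₀) < (k0:ℝ)+1 := Int.lt_floor_add_one _
          calc W = (W/(2*Real.pi*E₀))*(2*Real.pi*E₀) := by field_simp
          _ < ((k0:ℝ)+1)*(2*Real.pi*E₀) := by nlinarith
          _ = ((k0:ℝ)+1)*(2*Real.pi)*E₀ := by ring
        have hbnd : ∀ t u : ℝ, (k0:ℝ)*(2*Real.pi) ≤ α u - β (u - 2*t) ∧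
            α u - β (u - 2*t) ≤ (k0:ℝ)*(2*Real.pi) + 2*Real.pi := by
          intro t₀ u₀
          constructor
          · by_contra hcon
            push_neg at hcon
            have hct : Continuous (fun t => α u₀ - β (u₀ - 2*t)) := by fun_prop
            set v0 := α u₀ - β (u₀ - 2*t₀) with hv0def
            obtain ⟨δ, hδpos, hball⟩ := Metric.continuousAt_iff.1 hct.continuousAt
              ((k0:ℝ)*(2*Real.pi) - v0) (by linarith)
            apply hsingset (t₀ - δ) (t₀ + δ) (by linarith)
            intro t ht
            have htd : dist t t₀ < δ := by
              rw [Real.dist_eq, abs_lt]; cases ht; constructor <;> linarith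
            have hvt : α u₀ - β (u₀ - 2*t) < (k0:ℝ)*(2*Real.pi) := by
              have h2 := hball htd
              rw [Real.dist_eq, abs_lt] at h2
              have := h2.2
              linarith
            obtain ⟨u₂, hu₂, hge⟩ := exists_ge_of_integral_ge
              (g := fun u => α u - β (u - 2*t)) (by fun_prop) hE₀ (c := (k0:ℝ)*(2*Real.pi))
              (by rw [hmean0 t]; nlinarith)
            have hmem : (k0:ℝ)*(2*Real.pi) ∈ uIcc (α u₀ - β (u₀ - 2*t)) (α u₂ - β (u₂ - 2*t)) := by
              rw [Set.mem_uIcc]; left; exact ⟨hvt.le, hge⟩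
            obtain ⟨u, _, hu⟩ := intermediate_value_uIcc
              ((by fun_prop : Continuous (fun u => α u - β (u - 2*t))).continuousOn) hmem
            exact ⟨u, k0, hu⟩
          · by_contra hcon
            push_neg at hcon
            have hct : Continuous (fun t => α u₀ - β (u₀ - 2*t)) := by fun_prop
            set v0 := α u₀ - β (u₀ - 2*t₀) with hv0def
            obtain ⟨δ, hδpos, hball⟩ := Metric.continuousAt_iff.1 hct.continuousAt
              (v0 - ((k0:ℝ)*(2*Real.pi) + 2*Real.pi)) (by linarith)
            apply hsingset (t₀ - δ) (t₀ + δ) (by linarith)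
            intro t ht
            have htd : dist t t₀ < δ := by
              rw [Real.dist_eq, abs_lt]; cases ht; constructor <;> linarith
            have hvt : (k0:ℝ)*(2*Real.pi) + 2*Real.pi < α u₀ - β (u₀ - 2*t) := by
              have h2 := hball htd
              rw [Real.dist_eq, abs_lt] at h2
              have := h2.1
              linarith
            obtain ⟨u₂, hu₂, hle⟩ := exists_le_of_integral_le
              (g := fun u => α u - β (u - 2*t)) (by fun_prop) hE₀
              (c := (k0:ℝ)*(2*Real.pi) + 2*Real.pi)
              (by rw [hmean0 t]; nlinarith)
            have hmem : (k0:ℝ)*(2*Real.pi) + 2*Real.pi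
                ∈ uIcc (α u₂ - β (u₂ - 2*t)) (α u₀ - β (u₀ - 2*t)) := by
              rw [Set.mem_uIcc]; left; exact ⟨hle, hvt.le⟩
            obtain ⟨u, _, hu⟩ := intermediate_value_uIcc
              ((by fun_prop : Continuous (fun u => α u - β (u - 2*t))).continuousOn) hmem
            refine ⟨u, k0 + 1, ?_⟩
            have hu' : α u - β (u - 2*t) = (k0:ℝ)*(2*Real.pi) + 2*Real.pi := hu
            rw [hu']
            push_cast
            ring
        -- apply the core lemma
        push_neg at hBcon
        obtain ⟨v₁, hv₁⟩ := hBcon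
        apply core E₀ hE₀ α (fun v => β v + (k0:ℝ)*(2*Real.pi)) hαc (by fun_prop)
        · intro t u
          constructor
          · show 0 ≤ α u - (β (u - 2*t) + (k0:ℝ)*(2*Real.pi))
            linarith [(hbnd t u).1]
          · show α u - (β (u - 2*t) + (k0:ℝ)*(2*Real.pi)) ≤ 2*Real.pi
            linarith [(hbnd t u).2]
        · intro t
          rw [← hstar t]
          apply integral_congr
          intro u _
          show Complex.exp (α u * I) -
              Complex.exp (((β (u - 2*t) + (k0:ℝ)*(2*Real.pi) : ℝ)) * I)
            = Complex.exp (α u * I) - Complex.exp (β (u - 2*t) * I)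
          congr 1
          have harg : ((β (u - 2*t) + (k0:ℝ)*(2*Real.pi) : ℝ) : ℂ) * I
              = (β (u - 2*t) : ℂ) * I + (k0:ℂ) * (2*Real.pi*I) := by push_cast; ring
          rw [harg, Complex.exp_add, Complex.exp_int_mul_two_pi_mul_I, mul_one]
        · refine ⟨v₁, fun hcon => hv₁ ?_⟩
          have hcon' : β v₁ + (k0:ℝ)*(2*Real.pi) = β 0 + (k0:ℝ)*(2*Real.pi) := hcon
          have hβv : β v₁ = β 0 := by linarith
          rw [← hβl v₁, ← hβl 0, hβv]


end Stmt16


/-- dichotomy for timelike extremal cylinders in `ℝ^{1+2}`: either the whole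
slice at some time `t₀` is singular (`a'(x+t₀) + b'(x−t₀) = 0` for all `x`), or the set of
singular times contains a nonempty open interval. -/
theorem stmt_16
    (a b : ℝ → EuclideanSpace ℝ (Fin 2))
    (ha : ContDiff ℝ 1 a) (hb : ContDiff ℝ 1 b)
    (hnorm : ∀ s, ‖deriv a s‖ = 1 ∧ ‖deriv b s‖ = 1)
    (E₀ : ℝ) (hE₀ : 0 < E₀)
    (hpera : Function.Periodic (deriv a) E₀) (hperb : Function.Periodic (deriv b) E₀)
    (hint : (∫ s in (0:ℝ)..E₀, (deriv a s + deriv b s)) = 0) :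
    (∃ t₀ : ℝ, ∀ x : ℝ, deriv a (x + t₀) + deriv b (x - t₀) = 0) ∨
    (∃ t₁ t₂ : ℝ, t₁ < t₂ ∧
      Set.Ioo t₁ t₂ ⊆ {t : ℝ | ∃ x : ℝ, deriv a (x + t) + deriv b (x - t) = 0}) := by
  set φ := (Complex.orthonormalBasisOneI.repr.symm :
    EuclideanSpace ℝ (Fin 2) ≃ₗᵢ[ℝ] ℂ) with hφ
  have hda : Continuous (deriv a) := ha.continuous_deriv le_rfl
  have hdb : Continuous (deriv b) := hb.continuous_deriv le_rfl
  set A : ℝ → ℂ := fun s => φ (deriv a s) with hA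
  set B : ℝ → ℂ := fun s => -φ (deriv b s) with hB
  have hkey : ∀ p q : ℝ, A p = B q ↔ deriv a p + deriv b q = 0 := by
    intro p q
    constructor
    · intro h
      apply φ.injective
      rw [map_add, map_zero]
      have : φ (deriv a p) = -φ (deriv b q) := h
      rw [this]
      ring
    · intro h
      have h2 := congrArg φ h
      rw [map_add, map_zero] at h2
      show φ (deriv a p) = -φ (deriv b q)
      linear_combination h2
  have hint' : (∫ s in (0:ℝ)..E₀, (A s - B s)) = 0 := by
    set L : EuclideanSpace ℝ (Fin 2) →L[ℝ] ℂ :=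
      (φ.toContinuousLinearEquiv : EuclideanSpace ℝ (Fin 2) ≃L[ℝ] ℂ).toContinuousLinearMap
      with hL
    have hLφ : ∀ v, L v = φ v := fun v => rfl
    have h1 : (∫ s in (0:ℝ)..E₀, (A s - B s)) = ∫ s in (0:ℝ)..E₀, L (deriv a s + deriv b s) := by
      apply integral_congr
      intro s _
      show A s - B s = L (deriv a s + deriv b s)
      rw [hLφ, map_add]
      show φ (deriv a s) - -φ (deriv b s) = _
      ring
    rw [h1, L.intervalIntegral_comp_comm ((by fun_prop : Continuous (fun s => deriv a s + deriv b s)).intervalIntegrable 0 E₀), hint, map_zero]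
  rcases Stmt16.master E₀ hE₀ A B (by fun_prop) (by fun_prop)
      (fun s => by rw [hA]; simp only [LinearIsometryEquiv.norm_map]; exact (hnorm s).1)
      (fun s => by rw [hB]; simp only [norm_neg, LinearIsometryEquiv.norm_map]; exact (hnorm s).2)
      (fun s => by simp only [hA, hpera s])
      (fun s => by simp only [hB, hperb s])
      hint' with h | h
  · obtain ⟨t₀, ht₀⟩ := h
    exact Or.inl ⟨t₀, fun x => (hkey (x + t₀) (x - t₀)).1 (ht₀ x)⟩
  · obtain ⟨t₁, t₂, h12, hsub⟩ := h
    refine Or.inr ⟨t₁, t₂, h12, fun t ht => ?_⟩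
    obtain ⟨x, hx⟩ := hsub ht
    exact ⟨x, (hkey (x + t) (x - t)).1 hx⟩
end
end
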